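/- arXiv:2310.01864 — 3 statements merged into one kernel-verified Lean document; each statement's English description precedes it below -/
import Mathlib

section
/- Let k be a field of characteristic p ≥ 0 and let A be an integral domain containing k. Suppose x, y, z ∈ A \ {0} are pairwise relatively prime in A and satisfy x^a + y^b + z^c = 0 for positive integers a, b, c with p ∤ abc and 1/a + 1/b + 1/c ≤ 1. Then for every exponential map φ on A one has x, y, z ∈ A^φ; consequently k[x,y,z] ⊆ ML(A). -/
/-- An exponential map on a `k`-algebra `A`: a `k`-algebra homomorphism
`φ : A → A[U]` such that evaluation at `U = 0` is the identity and
`φ_V ∘ φ_U = φ_{U+V}` (coassociativity). Here `A[U,V]` is modelled as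
`Polynomial (Polynomial A)`, the outer variable being `U` and the inner one `V`. -/
structure ExpMap (k A : Type*) [CommSemiring k] [CommRing A] [Algebra k A] : Type _ where
  toFun : A →ₐ[k] Polynomial A
  eval_zero : ∀ a : A, (toFun a).eval 0 = a
  comp : ∀ a : A,
    Polynomial.map toFun.toRingHom (toFun a) =
      Polynomial.eval₂ (Polynomial.C.comp Polynomial.C)
        (Polynomial.X + Polynomial.C Polynomial.X) (toFun a)

/-- `a` belongs to the ring of invariants `A^φ` of the exponential map `φ`. -/
def ExpMap.IsFixed {k A : Type*} [CommSemiring k] [CommRing A] [Algebra k A]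
    (φ : ExpMap k A) (a : A) : Prop :=
  φ.toFun a = Polynomial.C a

/-- An exponential map is non-trivial if `A^φ ≠ A`. -/
def ExpMap.IsNontrivial {k A : Type*} [CommSemiring k] [CommRing A] [Algebra k A]
    (φ : ExpMap k A) : Prop :=
  ∃ a : A, ¬ φ.IsFixed a

/-- A `k`-algebra `A` is rigid if it admits no non-trivial exponential map. -/
def IsRigid (k A : Type*) [CommSemiring k] [CommRing A] [Algebra k A] : Prop :=
  ∀ φ : ExpMap k A, ¬ φ.IsNontrivial

/-- The Makar-Limanov invariant `ML(A)`: the intersection of the rings of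
invariants of all exponential maps on `A`. -/
def ML (k A : Type*) [CommSemiring k] [CommRing A] [Algebra k A] : Set A :=
  {a : A | ∀ φ : ExpMap k A, φ.IsFixed a}

section Aux

open Polynomial

/-- Lucas-type lemma: `p` does not divide `choose m (p ^ v_p(m))` for `m ≠ 0`. -/
theorem not_dvd_choose_pow_padicValNat {p : ℕ} (hp : p.Prime) :
    ∀ m : ℕ, m ≠ 0 → ¬ p ∣ m.choose (p ^ padicValNat p m) := by
  haveI : Fact p.Prime := ⟨hp⟩
  intro m
  induction m using Nat.strong_induction_on with
  | _ m IH =>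
    intro hm
    by_cases hdvd : p ∣ m
    · have hppos : 0 < p := hp.pos
      have hv : 1 ≤ padicValNat p m := one_le_padicValNat_of_dvd hm hdvd
      obtain ⟨v, hv'⟩ : ∃ v, padicValNat p m = v + 1 :=
        ⟨padicValNat p m - 1, (Nat.succ_pred_eq_of_pos hv).symm⟩
      have key := Choose.choose_modEq_choose_mod_mul_choose_div_nat
        (p := p) (n := m) (k := p ^ (v + 1))
      have hmp : m % p = 0 := Nat.mod_eq_zero_of_dvd hdvd
      have hkp : p ^ (v + 1) % p = 0 := Nat.mod_eq_zero_of_dvd (dvd_pow_self p (Nat.succ_ne_zero v))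
      have hkd : p ^ (v + 1) / p = p ^ v := by
        rw [pow_succ, Nat.mul_div_cancel _ hppos]
      rw [hmp, hkp, hkd, Nat.choose_zero_right, one_mul] at key
      have hmdiv_ne : m / p ≠ 0 := by
        intro h0
        have := Nat.div_mul_cancel hdvd
        rw [h0, zero_mul] at this
        exact hm this.symm
      have hmdiv_lt : m / p < m := Nat.div_lt_self (Nat.pos_of_ne_zero hm) hp.one_lt
      have hval : padicValNat p (m / p) = v := by
        rw [padicValNat.div hdvd, hv']; omega
      have IH' := IH (m / p) hmdiv_lt hmdiv_ne
      rw [hval] at IH'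
      rw [hv']
      intro hcon
      exact IH' (Nat.modEq_zero_iff_dvd.mp
        (key.symm.trans (Nat.modEq_zero_iff_dvd.mpr hcon)))
    · have hv : padicValNat p m = 0 := padicValNat.eq_zero_of_not_dvd hdvd
      rw [hv, pow_zero, Nat.choose_one_right]
      exact hdvd

open Polynomial UniqueFactorizationMonoid UniqueFactorizationDomain

theorem coprime_of_expand {L : Type*} [Field L] {p : ℕ} (hp : 0 < p) {f g : L[X]}
    (hf : f ≠ 0) (h : IsCoprime (expand L p f) (expand L p g)) : IsCoprime f g := by
  classical
  set q := EuclideanDomain.gcd f g with hq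
  have hq1 : q ∣ f := EuclideanDomain.gcd_dvd_left f g
  have hq2 : q ∣ g := EuclideanDomain.gcd_dvd_right f g
  have hunit : IsUnit ((expand L p) q) :=
    h.isUnit_of_dvd' (map_dvd (expand L p).toRingHom hq1) (map_dvd (expand L p).toRingHom hq2)
  have hdeg : q.natDegree = 0 := by
    have := natDegree_eq_zero_of_isUnit hunit
    rw [natDegree_expand] at this
    exact Nat.mul_eq_zero.mp this |>.elim (fun h => h) (fun h => absurd h hp.ne')
  have hqne : q ≠ 0 := by
    intro h0
    exact hf (EuclideanDomain.gcd_eq_zero_iff.mp (hq ▸ h0)).1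
  have : IsUnit q := by
    rw [Polynomial.eq_C_of_natDegree_eq_zero hdeg]
    exact (Polynomial.isUnit_C).mpr (isUnit_iff_ne_zero.mpr (by
      intro h0
      apply hqne
      rw [Polynomial.eq_C_of_natDegree_eq_zero hdeg, h0, map_zero]))
  exact EuclideanDomain.gcd_isUnit_iff.mp this

/-- Generalized Fermat-Catalan for polynomials over a field. -/
theorem polyFC {L : Type*} [Field L] {a b c : ℕ} (ha : 0 < a) (hb : 0 < b) (hc : 0 < c)
    (hpa : ¬ ringChar L ∣ a) (hpb : ¬ ringChar L ∣ b) (hpc : ¬ ringChar L ∣ c)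
    (hle : (1 : ℚ) / a + 1 / b + 1 / c ≤ 1) :
    ∀ N : ℕ, ∀ x y z : L[X], x.natDegree + y.natDegree + z.natDegree = N →
      x ≠ 0 → y ≠ 0 → z ≠ 0 → IsCoprime x y → IsCoprime y z → IsCoprime z x →
      x ^ a + y ^ b + z ^ c = 0 →
      x.natDegree = 0 ∧ y.natDegree = 0 ∧ z.natDegree = 0 := by
  classical
  haveI : CharP L (ringChar L) := ringChar.charP L
  intro N
  induction N using Nat.strong_induction_on with
  | _ N IH =>
    intro x y z hN hx hy hz hxy hyz hzx heq
    by_cases hS : x.natDegree + y.natDegree + z.natDegree = 0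
    · exact ⟨by omega, by omega, by omega⟩
    -- apply Mason-Stothers
    have hxa : x ^ a ≠ 0 := pow_ne_zero _ hx
    have hyb : y ^ b ≠ 0 := pow_ne_zero _ hy
    have hzc : z ^ c ≠ 0 := pow_ne_zero _ hz
    rcases Polynomial.abc hxa hyb hzc (hxy.pow) heq with hMS | hD
    · -- degree bound case: contradiction
      exfalso
      set S := x.natDegree + y.natDegree + z.natDegree with hSdef
      have hrad : (radical (x ^ a * y ^ b * z ^ c)).natDegree ≤ S := by
        have h1 : IsCoprime (x ^ a) (y ^ b * z ^ c) :=
          (hxy.pow).mul_right (hzx.symm.pow)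
        rw [mul_assoc, radical_mul h1.isRelPrime, radical_mul hyz.pow.isRelPrime,
          radical_pow x ha.ne', radical_pow y hb.ne', radical_pow z hc.ne']
        have hrx := Polynomial.natDegree_le_of_dvd (radical_dvd_self (a := x)) hx
        have hry := Polynomial.natDegree_le_of_dvd (radical_dvd_self (a := y)) hy
        have hrz := Polynomial.natDegree_le_of_dvd (radical_dvd_self (a := z)) hz
        rw [Polynomial.natDegree_mul (radical_ne_zero (a := x)) (mul_ne_zero (radical_ne_zero (a := y)) (radical_ne_zero (a := z))),
          Polynomial.natDegree_mul (radical_ne_zero (a := y)) (radical_ne_zero (a := z))]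
        omega
      obtain ⟨h1, h2, h3⟩ := hMS
      rw [natDegree_pow] at h1 h2 h3
      have e1 : a * x.natDegree + 1 ≤ S := le_trans h1 hrad
      have e2 : b * y.natDegree + 1 ≤ S := le_trans h2 hrad
      have e3 : c * z.natDegree + 1 ≤ S := le_trans h3 hrad
      -- numeric contradiction over ℚ
      have hqa : (0 : ℚ) < a := by exact_mod_cast ha
      have hqb : (0 : ℚ) < b := by exact_mod_cast hb
      have hqc : (0 : ℚ) < c := by exact_mod_cast hc
      have f1 : (x.natDegree : ℚ) ≤ ((S : ℚ) - 1) * (1 / a) := by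
        rw [mul_one_div, le_div_iff₀ hqa]
        have : (a : ℚ) * x.natDegree + 1 ≤ S := by exact_mod_cast e1
        linarith
      have f2 : (y.natDegree : ℚ) ≤ ((S : ℚ) - 1) * (1 / b) := by
        rw [mul_one_div, le_div_iff₀ hqb]
        have : (b : ℚ) * y.natDegree + 1 ≤ S := by exact_mod_cast e2
        linarith
      have f3 : (z.natDegree : ℚ) ≤ ((S : ℚ) - 1) * (1 / c) := by
        rw [mul_one_div, le_div_iff₀ hqc]
        have : (c : ℚ) * z.natDegree + 1 ≤ S := by exact_mod_cast e3
        linarith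
      have hSQ : (S : ℚ) = x.natDegree + y.natDegree + z.natDegree := by
        rw [hSdef]; push_cast; ring
      have hS1 : (1 : ℚ) ≤ S := by
        have : 1 ≤ S := by omega
        exact_mod_cast this
      have : (S : ℚ) ≤ ((S : ℚ) - 1) * (1 / a + 1 / b + 1 / c) := by
        have hexp : ((S:ℚ)-1) * (1/a+1/b+1/c)
            = ((S:ℚ)-1)*(1/a) + ((S:ℚ)-1)*(1/b) + ((S:ℚ)-1)*(1/c) := by ring
        linarith [f1, f2, f3, hexp, hSQ]
      have : (S : ℚ) ≤ (S : ℚ) - 1 := by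
        calc (S : ℚ) ≤ ((S : ℚ) - 1) * (1 / a + 1 / b + 1 / c) := this
          _ ≤ ((S : ℚ) - 1) * 1 := by
              apply mul_le_mul_of_nonneg_left hle; linarith
          _ = (S : ℚ) - 1 := mul_one _
      linarith
    · -- derivative case
      obtain ⟨hdx, hdy, hdz⟩ := hD
      have hca : (a : L) ≠ 0 := fun h => hpa ((CharP.cast_eq_zero_iff L (ringChar L) a).mp h)
      have hcb : (b : L) ≠ 0 := fun h => hpb ((CharP.cast_eq_zero_iff L (ringChar L) b).mp h)
      have hcc : (c : L) ≠ 0 := fun h => hpc ((CharP.cast_eq_zero_iff L (ringChar L) c).mp h)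
      have hdx' : derivative x = 0 := by
        rw [derivative_pow] at hdx
        rcases mul_eq_zero.mp hdx with h | h
        · exfalso
          rcases mul_eq_zero.mp h with h | h
          · exact hca (by simpa using (Polynomial.C_eq_zero.mp h))
          · exact pow_ne_zero _ hx h
        · exact h
      have hdy' : derivative y = 0 := by
        rw [derivative_pow] at hdy
        rcases mul_eq_zero.mp hdy with h | h
        · exfalso
          rcases mul_eq_zero.mp h with h | h
          · exact hcb (by simpa using (Polynomial.C_eq_zero.mp h))
          · exact pow_ne_zero _ hy h
        · exact h
      have hdz' : derivative z = 0 := by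
        rw [derivative_pow] at hdz
        rcases mul_eq_zero.mp hdz with h | h
        · exfalso
          rcases mul_eq_zero.mp h with h | h
          · exact hcc (by simpa using (Polynomial.C_eq_zero.mp h))
          · exact pow_ne_zero _ hz h
        · exact h
      rcases CharP.char_is_prime_or_zero L (ringChar L) with hprime | hzero
      · -- char p > 0 : descend along Frobenius substitution
        set p := ringChar L with hpdef
        have hppos : 0 < p := hprime.pos
        set x1 := contract p x with hx1
        set y1 := contract p y with hy1
        set z1 := contract p z with hz1
        have hex : expand L p x1 = x := expand_contract p hdx' hppos.ne'
        have hey : expand L p y1 = y := expand_contract p hdy' hppos.ne'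
        have hez : expand L p z1 = z := expand_contract p hdz' hppos.ne'
        have hx1ne : x1 ≠ 0 := by
          intro h0; apply hx; rw [← hex, h0, map_zero]
        have hy1ne : y1 ≠ 0 := by
          intro h0; apply hy; rw [← hey, h0, map_zero]
        have hz1ne : z1 ≠ 0 := by
          intro h0; apply hz; rw [← hez, h0, map_zero]
        have hco1 : IsCoprime x1 y1 := coprime_of_expand hppos hx1ne (by rw [hex, hey]; exact hxy)
        have hco2 : IsCoprime y1 z1 := coprime_of_expand hppos hy1ne (by rw [hey, hez]; exact hyz)
        have hco3 : IsCoprime z1 x1 := coprime_of_expand hppos hz1ne (by rw [hez, hex]; exact hzx)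
        have heq1 : x1 ^ a + y1 ^ b + z1 ^ c = 0 := by
          apply expand_injective hppos
          rw [map_add, map_add, map_pow, map_pow, map_pow, hex, hey, hez, heq, map_zero]
        have hdeg_x : x.natDegree = x1.natDegree * p := by rw [← hex, natDegree_expand]
        have hdeg_y : y.natDegree = y1.natDegree * p := by rw [← hey, natDegree_expand]
        have hdeg_z : z.natDegree = z1.natDegree * p := by rw [← hez, natDegree_expand]
        have h2 : 2 ≤ p := hprime.two_le
        have hsum : (x1.natDegree + y1.natDegree + z1.natDegree) * p = N := by
          rw [← hN, hdeg_x, hdeg_y, hdeg_z]; ring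
        have hs1 : x1.natDegree + y1.natDegree + z1.natDegree ≠ 0 := by
          intro h0; rw [h0, zero_mul] at hsum; omega
        have hlt : x1.natDegree + y1.natDegree + z1.natDegree < N :=
          calc x1.natDegree + y1.natDegree + z1.natDegree
              < (x1.natDegree + y1.natDegree + z1.natDegree) * 2 := by omega
            _ ≤ (x1.natDegree + y1.natDegree + z1.natDegree) * p :=
                Nat.mul_le_mul_left _ h2
            _ = N := hsum
        obtain ⟨g1, g2, g3⟩ := IH _ hlt x1 y1 z1 rfl hx1ne hy1ne hz1ne hco1 hco2 hco3 heq1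
        exact ⟨by rw [hdeg_x, g1, zero_mul], by rw [hdeg_y, g2, zero_mul],
          by rw [hdeg_z, g3, zero_mul]⟩
      · -- char 0
        haveI : CharP L 0 := hzero ▸ ringChar.charP L
        haveI : CharZero L := CharP.charP_to_charZero L
        exact ⟨natDegree_eq_zero_of_derivative_eq_zero hdx',
          natDegree_eq_zero_of_derivative_eq_zero hdy',
          natDegree_eq_zero_of_derivative_eq_zero hdz'⟩
open Polynomial Finset

namespace ExpMap

variable {k A : Type*} [CommSemiring k] [CommRing A] [Nontrivial A] [Algebra k A] (φ : ExpMap k A)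

lemma toFun_eq_zero_iff {w : A} : φ.toFun w = 0 ↔ w = 0 := by
  constructor
  · intro h
    have := φ.eval_zero w
    rw [h] at this
    simpa using this.symm
  · intro h; rw [h, map_zero]

lemma isFixed_of_natDegree_eq_zero {w : A} (h : (φ.toFun w).natDegree = 0) :
    φ.IsFixed w := by
  obtain ⟨r, hr⟩ := Polynomial.natDegree_eq_zero.mp h
  have h2 := φ.eval_zero w
  rw [← hr, eval_C] at h2
  rw [IsFixed, ← hr, h2]

lemma isFixed_natDegree {w : A} (h : φ.IsFixed w) : (φ.toFun w).natDegree = 0 := by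
  rw [h]; exact natDegree_C w

/-- The fundamental coefficient identity coming from coassociativity. -/
lemma coeff_formula (w : A) (i : ℕ) :
    φ.toFun ((φ.toFun w).coeff i) =
      ∑ j ∈ range ((φ.toFun w).natDegree + 1),
        C ((φ.toFun w).coeff j) * (X ^ (j - i) * ((j.choose i : ℕ) : Polynomial A)) := by
  have h := congrArg (fun q => Polynomial.coeff q i) (φ.comp w)
  rw [Polynomial.coeff_map] at h
  rw [Polynomial.eval₂_eq_sum_range] at h
  rw [Polynomial.finset_sum_coeff] at h
  have : ∀ j ∈ range ((φ.toFun w).natDegree + 1),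
      ((Polynomial.C.comp Polynomial.C) ((φ.toFun w).coeff j) * (X + C X) ^ j).coeff i
        = C ((φ.toFun w).coeff j) * (X ^ (j - i) * ((j.choose i : ℕ) : Polynomial A)) := by
    intro j _
    rw [RingHom.comp_apply, Polynomial.coeff_C_mul, Polynomial.coeff_X_add_C_pow]
  rw [Finset.sum_congr rfl this] at h
  exact h

lemma natDegree_coeff_le (w : A) (i : ℕ) :
    (φ.toFun ((φ.toFun w).coeff i)).natDegree ≤ (φ.toFun w).natDegree - i := by
  rw [coeff_formula]
  apply Polynomial.natDegree_sum_le_of_forall_le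
  intro j hj
  rw [Finset.mem_range] at hj
  calc (C ((φ.toFun w).coeff j) * (X ^ (j - i) * ((j.choose i : ℕ) : Polynomial A))).natDegree
      ≤ (X ^ (j - i) * ((j.choose i : ℕ) : Polynomial A)).natDegree :=
        Polynomial.natDegree_C_mul_le _ _
    _ ≤ (X ^ (j - i) : Polynomial A).natDegree + ((j.choose i : ℕ) : Polynomial A).natDegree :=
        Polynomial.natDegree_mul_le
    _ ≤ (j - i) + 0 := by
        rw [Polynomial.natDegree_X_pow]
        exact Nat.add_le_add_left (Nat.le_zero.mpr (Polynomial.natDegree_natCast _)) _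
    _ ≤ (φ.toFun w).natDegree - i := by omega

lemma coeff_coeff (w : A) {i : ℕ} (hi : i ≤ (φ.toFun w).natDegree) :
    (φ.toFun ((φ.toFun w).coeff i)).coeff ((φ.toFun w).natDegree - i)
      = (((φ.toFun w).natDegree.choose i : ℕ) : A) * (φ.toFun w).leadingCoeff := by
  set m := (φ.toFun w).natDegree with hm
  rw [coeff_formula, Polynomial.finset_sum_coeff]
  rw [Finset.sum_eq_single m]
  · rw [Polynomial.coeff_C_mul]
    have : ((X : Polynomial A) ^ (m - i) * ((m.choose i : ℕ) : Polynomial A)).coeff (m - i)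
        = ((m.choose i : ℕ) : A) := by
      rw [← Polynomial.C_eq_natCast, Polynomial.coeff_mul_C, Polynomial.coeff_X_pow,
        if_pos rfl, one_mul]
    rw [this, Polynomial.leadingCoeff, ← hm, mul_comm]
  · intro j hj hjm
    rw [Finset.mem_range] at hj
    by_cases hij : j < i
    · have : j.choose i = 0 := Nat.choose_eq_zero_of_lt hij
      simp [this]
    · push_neg at hij
      have hne : j - i ≠ m - i := by omega
      rw [Polynomial.coeff_C_mul, ← Polynomial.C_eq_natCast, Polynomial.coeff_mul_C,
        Polynomial.coeff_X_pow, if_neg (Ne.symm hne)]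
      ring
  · intro hmem
    exact absurd (Finset.mem_range.mpr (by omega)) hmem

lemma isFixed_leadingCoeff (w : A) : φ.IsFixed ((φ.toFun w).leadingCoeff) := by
  apply φ.isFixed_of_natDegree_eq_zero
  have := φ.natDegree_coeff_le w ((φ.toFun w).natDegree)
  rw [Nat.sub_self] at this
  rw [Polynomial.leadingCoeff]
  omega

end ExpMap

namespace ExpMap

section Domain

variable {k A : Type*} [CommSemiring k] [CommRing A] [IsDomain A] [Algebra k A] (φ : ExpMap k A)

lemma degree_production {w : A} (hw : φ.toFun w ≠ 0) {i : ℕ}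
    (hi : i ≤ (φ.toFun w).natDegree)
    (hch : ((((φ.toFun w).natDegree.choose i) : ℕ) : A) ≠ 0) :
    ∃ w' : A, w' ≠ 0 ∧ (φ.toFun w').natDegree = (φ.toFun w).natDegree - i := by
  refine ⟨(φ.toFun w).coeff i, ?_, ?_⟩
  · intro h0
    have hc := φ.coeff_coeff w hi
    rw [h0, map_zero, Polynomial.coeff_zero] at hc
    exact mul_ne_zero hch (Polynomial.leadingCoeff_ne_zero.mpr hw) hc.symm
  · have hc := φ.coeff_coeff w hi
    have hne : (φ.toFun ((φ.toFun w).coeff i)).coeff ((φ.toFun w).natDegree - i) ≠ 0 := by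
      rw [hc]
      exact mul_ne_zero hch (Polynomial.leadingCoeff_ne_zero.mpr hw)
    exact le_antisymm (φ.natDegree_coeff_le w i) (Polynomial.le_natDegree_of_ne_zero hne)

/-- The invariant subalgebra `A^φ`. -/
def fixedSubalgebra : Subalgebra k A where
  carrier := {a | φ.IsFixed a}
  mul_mem' := by
    intro a b ha hb
    show φ.toFun (a * b) = C (a * b)
    rw [map_mul, ha, hb, C_mul]
  add_mem' := by
    intro a b ha hb
    show φ.toFun (a + b) = C (a + b)
    rw [map_add, ha, hb, C_add]
  algebraMap_mem' := by
    intro r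
    show φ.toFun (algebraMap k A r) = C (algebraMap k A r)
    rw [AlgHom.commutes, Polynomial.algebraMap_apply]

lemma mem_fixedSubalgebra_iff {a : A} : a ∈ φ.fixedSubalgebra ↔ φ.IsFixed a := Iff.rfl

end Domain

end ExpMap

open Polynomial Finset

set_option maxHeartbeats 1600000 in
set_option synthInstance.maxHeartbeats 400000 in
theorem ExpMap.fixes (k : Type*) [Field k] (A : Type*) [CommRing A] [IsDomain A] [Algebra k A]
    (φ : ExpMap k A)
    (x y z : A) (hx : x ≠ 0) (hy : y ≠ 0) (hz : z ≠ 0)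
    (hxy : Ideal.span {x} ⊓ Ideal.span {y} = Ideal.span {x * y})
    (hyz : Ideal.span {y} ⊓ Ideal.span {z} = Ideal.span {y * z})
    (hxz : Ideal.span {x} ⊓ Ideal.span {z} = Ideal.span {x * z})
    (a b c : ℕ) (ha : 0 < a) (hb : 0 < b) (hc : 0 < c)
    (hp : ¬ ringChar k ∣ a * b * c)
    (hle : (1 : ℚ) / a + 1 / b + 1 / c ≤ 1)
    (heq : x ^ a + y ^ b + z ^ c = 0) :
    φ.IsFixed x ∧ φ.IsFixed y ∧ φ.IsFixed z := by
  classical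
  by_cases htriv : ∀ w : A, (φ.toFun w).natDegree = 0
  · exact ⟨φ.isFixed_of_natDegree_eq_zero (htriv x),
      φ.isFixed_of_natDegree_eq_zero (htriv y),
      φ.isFixed_of_natDegree_eq_zero (htriv z)⟩
  push_neg at htriv
  obtain ⟨w0, hw0⟩ := htriv
  have hex : ∃ m, 0 < m ∧ ∃ w : A, (φ.toFun w).natDegree = m :=
    ⟨(φ.toFun w0).natDegree, Nat.pos_of_ne_zero hw0, w0, rfl⟩
  set n := Nat.find hex with hn
  obtain ⟨hnpos, t, htn⟩ := Nat.find_spec hex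
  have hmin : ∀ m, 0 < m → (∃ w : A, (φ.toFun w).natDegree = m) → n ≤ m :=
    fun m h1 h2 => Nat.find_le ⟨h1, h2⟩
  have hφt : φ.toFun t ≠ 0 := by
    intro h0; rw [h0] at htn; simp at htn; omega
  have htne : t ≠ 0 := fun h0 => hφt (by rw [h0, map_zero])
  -- characteristic facts
  set p := ringChar k with hpchar
  haveI : CharP k p := ringChar.charP k
  have halginj : Function.Injective (algebraMap k A) := RingHom.injective _
  have hcast : ∀ N : ℕ, ¬ p ∣ N → ((N : ℕ) : A) ≠ 0 := by
    intro N hN h0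
    apply hN
    rw [← CharP.cast_eq_zero_iff k p N]
    apply halginj
    rw [map_natCast, map_zero, h0]
  -- degree production: from any positive degree, get degree `eDeg m`
  have hprod : ∀ m : ℕ, 0 < m → (∃ w : A, (φ.toFun w).natDegree = m) →
      ∃ m', 0 < m' ∧ m' ∣ m ∧ (p = 0 → m' = 1) ∧ (p ≠ 0 → m' = p ^ (padicValNat p m)) ∧
        ∃ w' : A, w' ≠ 0 ∧ (φ.toFun w').natDegree = m' := by
    intro m hm hwex
    obtain ⟨w, hwm⟩ := hwex
    have hφw : φ.toFun w ≠ 0 := by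
      intro h0; rw [h0] at hwm; simp at hwm; omega
    by_cases hp0 : p = 0
    · have hch : ((m.choose (m - 1) : ℕ) : A) ≠ 0 := by
        apply hcast
        rw [hp0]
        rw [Nat.choose_symm (by omega : 1 ≤ m), Nat.choose_one_right]
        omega
      obtain ⟨w', hw'ne, hw'deg⟩ := φ.degree_production hφw (by omega : m - 1 ≤ (φ.toFun w).natDegree)
        (by rw [hwm]; exact hch)
      refine ⟨1, one_pos, one_dvd m, fun _ => rfl, fun h => absurd hp0 h, w', hw'ne, ?_⟩
      rw [hw'deg, hwm]; omega
    · have hprime : p.Prime := (CharP.char_is_prime_or_zero k p).resolve_right hp0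
      set v := padicValNat p m with hv
      have hpv_dvd : p ^ v ∣ m := pow_padicValNat_dvd
      have hpv_le : p ^ v ≤ m := Nat.le_of_dvd hm hpv_dvd
      have hpv_pos : 0 < p ^ v := pow_pos hprime.pos v
      have hch : ((m.choose (m - p ^ v) : ℕ) : A) ≠ 0 := by
        apply hcast
        rw [Nat.choose_symm hpv_le]
        exact not_dvd_choose_pow_padicValNat hprime m (by omega)
      obtain ⟨w', hw'ne, hw'deg⟩ := φ.degree_production hφw
        (by omega : m - p ^ v ≤ (φ.toFun w).natDegree) (by rw [hwm]; exact hch)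
      refine ⟨p ^ v, hpv_pos, hpv_dvd, fun h => absurd h hp0, fun _ => rfl, w', hw'ne, ?_⟩
      rw [hw'deg, hwm]; omega
  -- minimal degree is eDeg of itself
  obtain ⟨n', hn'pos, hn'dvd, hn'c0, hn'cp, wn', hwn'ne, hwn'deg⟩ := hprod n hnpos ⟨t, htn⟩
  have hn'n : n' = n := le_antisymm (Nat.le_of_dvd hnpos hn'dvd) (hmin n' hn'pos ⟨wn', hwn'deg⟩)
  have hdvd : ∀ w : A, n ∣ (φ.toFun w).natDegree := by
    intro w
    by_cases h0 : (φ.toFun w).natDegree = 0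
    · rw [h0]; exact dvd_zero n
    obtain ⟨m', hm'pos, hm'dvd, hm'c0, hm'cp, wm', hwm'ne, hwm'deg⟩ :=
      hprod _ (Nat.pos_of_ne_zero h0) ⟨w, rfl⟩
    have hnm' : n ≤ m' := hmin m' hm'pos ⟨wm', hwm'deg⟩
    by_cases hp0 : p = 0
    · rw [← hn'n, hn'c0 hp0]; exact one_dvd _
    · have hprime : p.Prime := (CharP.char_is_prime_or_zero k p).resolve_right hp0
      have h1 : n = p ^ (padicValNat p n) := by
        have h1' := hn'cp hp0
        rw [hn'n] at h1'
        exact h1'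
      have h2 : m' = p ^ (padicValNat p ((φ.toFun w).natDegree)) := hm'cp hp0
      have hle' : padicValNat p n ≤ padicValNat p ((φ.toFun w).natDegree) := by
        by_contra hcon
        push_neg at hcon
        have : m' < n := by
          rw [h1, h2]
          exact Nat.pow_lt_pow_right hprime.one_lt hcon
        omega
      calc n = p ^ (padicValNat p n) := h1
        _ ∣ p ^ (padicValNat p ((φ.toFun w).natDegree)) := pow_dvd_pow p hle'
        _ ∣ (φ.toFun w).natDegree := h2 ▸ hm'dvd
  -- the invariant subalgebra and evaluation of B-polynomials at t
  set B := φ.fixedSubalgebra (k := k) with hB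
  have hfix : ∀ bb : ↥B, φ.toFun (bb : A) = Polynomial.C (bb : A) := fun bb => bb.2
  set evB : Polynomial ↥B →+* A :=
    Polynomial.eval₂RingHom ((Subalgebra.val B) : _ →ₐ[k] A).toRingHom t with hevBdef
  set μ : A := (φ.toFun t).leadingCoeff with hμdef
  have hμB : φ.IsFixed μ := φ.isFixed_leadingCoeff t
  have hμne : μ ≠ 0 := Polynomial.leadingCoeff_ne_zero.mpr hφt
  have hevB : ∀ P : Polynomial ↥B, φ.toFun (evB P) =
      ∑ j ∈ range (P.natDegree + 1), Polynomial.C ((P.coeff j : A)) * (φ.toFun t) ^ j := by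
    intro P
    rw [hevBdef]
    rw [Polynomial.coe_eval₂RingHom, Polynomial.eval₂_eq_sum_range]
    rw [map_sum]
    apply Finset.sum_congr rfl
    intro j _
    rw [map_mul, map_pow]
    congr 1
    exact hfix _
  have hCev : ∀ bb : ↥B, evB (Polynomial.C bb) = (bb : A) := by
    intro bb
    rw [hevBdef, Polynomial.coe_eval₂RingHom, Polynomial.eval₂_C]
    rfl
  have hXev : evB Polynomial.X = t := by
    rw [hevBdef, Polynomial.coe_eval₂RingHom, Polynomial.eval₂_X]
  have hE : ∀ P : Polynomial ↥B, P ≠ 0 →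
      evB P ≠ 0 ∧ (φ.toFun (evB P)).natDegree = P.natDegree * n := by
    intro P hP
    set r := P.natDegree with hr
    have hcr : ((P.coeff r : ↥B) : A) ≠ 0 := by
      rw [ne_eq, ZeroMemClass.coe_eq_zero]
      exact Polynomial.leadingCoeff_ne_zero.mpr hP
    have hcoeff : (φ.toFun (evB P)).coeff (r * n) = ((P.coeff r : ↥B) : A) * μ ^ r := by
      rw [hevB, Polynomial.finset_sum_coeff]
      rw [Finset.sum_eq_single r]
      · rw [Polynomial.coeff_C_mul]
        congr 1
        have h1 : ((φ.toFun t) ^ r).natDegree = r * n := by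
          rw [Polynomial.natDegree_pow, htn, ← hn]
        rw [← h1, Polynomial.coeff_natDegree, Polynomial.leadingCoeff_pow]
      · intro j hj hjr
        rw [Finset.mem_range] at hj
        have hjlt : j < r := by omega
        apply Polynomial.coeff_eq_zero_of_natDegree_lt
        calc (Polynomial.C ((P.coeff j : ↥B) : A) * (φ.toFun t) ^ j).natDegree
            ≤ ((φ.toFun t) ^ j).natDegree := Polynomial.natDegree_C_mul_le _ _
          _ = j * n := by rw [Polynomial.natDegree_pow, htn, ← hn]
          _ < r * n := by
              have := hnpos; rw [← hn] at this
              exact (Nat.mul_lt_mul_right this).mpr hjlt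
      · intro hmem
        exact absurd (Finset.mem_range.mpr (by omega)) hmem
    have hcne : (φ.toFun (evB P)).coeff (r * n) ≠ 0 := by
      rw [hcoeff]; exact mul_ne_zero hcr (pow_ne_zero _ hμne)
    have hφne : φ.toFun (evB P) ≠ 0 := fun h0 => hcne (by rw [h0, Polynomial.coeff_zero])
    refine ⟨fun h0 => hφne (by rw [h0, map_zero]), le_antisymm ?_ (Polynomial.le_natDegree_of_ne_zero hcne)⟩
    rw [hevB]
    apply Polynomial.natDegree_sum_le_of_forall_le
    intro j hj
    rw [Finset.mem_range] at hj
    calc (Polynomial.C ((P.coeff j : ↥B) : A) * (φ.toFun t) ^ j).natDegree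
        ≤ ((φ.toFun t) ^ j).natDegree := Polynomial.natDegree_C_mul_le _ _
      _ = j * n := by rw [Polynomial.natDegree_pow, htn, ← hn]
      _ ≤ r * n := Nat.mul_le_mul_right n (by omega)
  have hE0 : ∀ P : Polynomial ↥B, evB P = 0 → P = 0 := by
    intro P h0
    by_contra hne
    exact (hE P hne).1 h0
  -- representation of arbitrary elements
  have hrep : ∀ m : ℕ, ∀ w : A, (φ.toFun w).natDegree = m →
      ∃ (P : Polynomial ↥B) (s : ↥B), s ≠ 0 ∧ (s : A) * w = evB P ∧
        (w ≠ 0 → P ≠ 0 ∧ P.natDegree * n = m) := by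
    intro m
    induction m using Nat.strong_induction_on with
    | _ m IH =>
      intro w hwm
      by_cases hm0 : m = 0
      · subst hm0
        by_cases hw0 : w = 0
        · exact ⟨0, 1, one_ne_zero, by rw [hw0, map_zero, mul_zero], fun h => absurd hw0 h⟩
        · have hfw : φ.IsFixed w := φ.isFixed_of_natDegree_eq_zero hwm
          refine ⟨Polynomial.C ⟨w, hfw⟩, 1, one_ne_zero, ?_, fun _ => ⟨?_, ?_⟩⟩
          · rw [OneMemClass.coe_one, one_mul, hevBdef, Polynomial.coe_eval₂RingHom,
              Polynomial.eval₂_C]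
            rfl
          · rw [ne_eq, Polynomial.C_eq_zero]
            intro h0
            exact hw0 (by simpa using congrArg (Subtype.val) h0)
          · rw [Polynomial.natDegree_C, zero_mul]
      · have hw0 : w ≠ 0 := by
          intro h0; rw [h0, map_zero] at hwm; simp at hwm; omega
        have hφw : φ.toFun w ≠ 0 := fun h0 => hw0 (φ.toFun_eq_zero_iff.mp h0)
        obtain ⟨q, hq⟩ := hdvd w
        rw [hwm] at hq
        have hqpos : 0 < q := by
          rcases Nat.eq_zero_or_pos q with h0 | h0
          · rw [h0, mul_zero] at hq; omega
          · exact h0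
        set lam : A := (φ.toFun w).leadingCoeff with hlam
        have hlamB : φ.IsFixed lam := φ.isFixed_leadingCoeff w
        have hlamne : lam ≠ 0 := Polynomial.leadingCoeff_ne_zero.mpr hφw
        set w' : A := μ ^ q * w - lam * t ^ q with hw'
        have hφw' : φ.toFun w' = Polynomial.C (μ ^ q) * φ.toFun w
            - Polynomial.C lam * (φ.toFun t) ^ q := by
          rw [hw', map_sub, map_mul, map_mul, map_pow, map_pow, hμB, hlamB, ← Polynomial.C_pow]
        have hfdeg : (Polynomial.C (μ ^ q) * φ.toFun w).natDegree = m := by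
          rw [Polynomial.natDegree_mul (by
            rw [ne_eq, Polynomial.C_eq_zero]; exact pow_ne_zero _ hμne) hφw,
            Polynomial.natDegree_C, zero_add, hwm]
        have hgdeg : (Polynomial.C lam * (φ.toFun t) ^ q).natDegree = m := by
          rw [Polynomial.natDegree_mul (by
            rw [ne_eq, Polynomial.C_eq_zero]; exact hlamne) (pow_ne_zero _ hφt),
            Polynomial.natDegree_C, zero_add, Polynomial.natDegree_pow, htn, ← hn, hq]
          exact Nat.mul_comm q n
        have hfne : Polynomial.C (μ ^ q) * φ.toFun w ≠ 0 :=
          mul_ne_zero (by rw [ne_eq, Polynomial.C_eq_zero]; exact pow_ne_zero _ hμne) hφw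
        have hgne : Polynomial.C lam * (φ.toFun t) ^ q ≠ 0 :=
          mul_ne_zero (by rw [ne_eq, Polynomial.C_eq_zero]; exact hlamne) (pow_ne_zero _ hφt)
        have hlc : (Polynomial.C (μ ^ q) * φ.toFun w).leadingCoeff
            = (Polynomial.C lam * (φ.toFun t) ^ q).leadingCoeff := by
          rw [Polynomial.leadingCoeff_mul, Polynomial.leadingCoeff_mul,
            Polynomial.leadingCoeff_C, Polynomial.leadingCoeff_C,
            Polynomial.leadingCoeff_pow]
          rw [hlam, hμdef]
          ring
        have hdeg' : (φ.toFun w').natDegree < m := by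
          by_cases h0 : φ.toFun w' = 0
          · rw [h0]; simp; omega
          · have hsub := Polynomial.degree_sub_lt
              (by rw [Polynomial.degree_eq_natDegree hfne, Polynomial.degree_eq_natDegree hgne,
                hfdeg, hgdeg]) hfne hlc
            rw [← hφw'] at hsub
            have := Polynomial.natDegree_lt_natDegree h0 hsub
            omega
        obtain ⟨P', s', hs', heval', hP'⟩ := IH _ hdeg' w' rfl
        have hμBB : μ ∈ B := hμB
        have hlamBB : lam ∈ B := hlamB
        set μB : ↥B := ⟨μ, hμBB⟩ with hμBdef
        set lamB : ↥B := ⟨lam, hlamBB⟩ with hlamBdef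
        have hμBne : μB ≠ 0 :=
          fun h0 => hμne (by simpa [hμBdef] using congrArg Subtype.val h0)
        have hlamBne : lamB ≠ 0 :=
          fun h0 => hlamne (by simpa [hlamBdef] using congrArg Subtype.val h0)
        have hP'lt : P'.natDegree < q := by
          by_cases hP'0 : P' = 0
          · rw [hP'0, Polynomial.natDegree_zero]; exact hqpos
          · have hw'ne : w' ≠ 0 := by
              intro h0
              apply hP'0
              apply hE0
              rw [← heval', h0, mul_zero]
            obtain ⟨_, hdegP'⟩ := hP' hw'ne
            have hlt2 : P'.natDegree * n < q * n := by
              rw [hdegP']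
              calc (φ.toFun w').natDegree < m := hdeg'
                _ = q * n := by rw [hq, Nat.mul_comm]
            exact lt_of_mul_lt_mul_right hlt2 (Nat.zero_le n)
        have hPdeg : (Polynomial.C s' * Polynomial.C lamB * Polynomial.X ^ q
            + P').natDegree = q := by
          have hhead : (Polynomial.C s' * Polynomial.C lamB
              * Polynomial.X ^ q).natDegree = q := by
            rw [← Polynomial.C_mul, Polynomial.natDegree_C_mul_X_pow q _
              (mul_ne_zero hs' hlamBne)]
          rw [Polynomial.natDegree_add_eq_left_of_natDegree_lt (by rw [hhead]; exact hP'lt),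
            hhead]
        refine ⟨Polynomial.C s' * Polynomial.C lamB * Polynomial.X ^ q + P',
          s' * μB ^ q, mul_ne_zero hs' (pow_ne_zero _ hμBne), ?_, fun _ => ⟨?_, ?_⟩⟩
        · rw [map_add, map_mul, map_mul, map_pow, hCev, hCev, hXev, ← heval', hw']
          rw [MulMemClass.coe_mul, SubmonoidClass.coe_pow, hμBdef, hlamBdef]
          push_cast
          ring
        · intro h0
          rw [h0, Polynomial.natDegree_zero] at hPdeg
          omega
        · rw [hPdeg, hq, Nat.mul_comm]
  -- fraction fields
  set K := FractionRing A with hK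
  set θ : A →+* K := algebraMap A K with hθ
  have hθinj : Function.Injective θ := IsFractionRing.injective A K
  haveI : IsDomain ↥B := inferInstance
  set LL := FractionRing ↥B with hLL
  set algB : ↥B →+* LL := algebraMap ↥B LL with halgB
  have halgBinj : Function.Injective algB := IsFractionRing.injective ↥B LL
  set gg : ↥B →+* K := θ.comp (Subalgebra.val B).toRingHom with hgg
  have hginj : Function.Injective gg := hθinj.comp Subtype.val_injective
  set ι : LL →+* K := IsFractionRing.lift hginj with hι
  have hιalg : ∀ bb : ↥B, ι (algB bb) = θ (bb : A) :=
    fun bb => IsFractionRing.lift_algebraMap hginj bb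
  set Θ : Polynomial LL →+* K := Polynomial.eval₂RingHom ι (θ t) with hΘ
  have hΘC : ∀ l : LL, Θ (Polynomial.C l) = ι l := fun l => by
    rw [hΘ, Polynomial.coe_eval₂RingHom, Polynomial.eval₂_C]
  have hcomm : ∀ Pt : Polynomial ↥B, Θ (Pt.map algB) = θ (evB Pt) := by
    intro Pt
    rw [hΘ, Polynomial.coe_eval₂RingHom, Polynomial.eval₂_map]
    rw [hevBdef, Polynomial.coe_eval₂RingHom, Polynomial.hom_eval₂]
    congr 1
    ext bb
    exact hιalg bb
  -- common denominators for images of LL-polynomials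
  have hF : ∀ P : Polynomial LL, ∃ (e : A) (s : ↥B), s ≠ 0 ∧ Θ P * θ ((s : A)) = θ e ∧
      (P ≠ 0 → e ≠ 0 ∧ (φ.toFun e).natDegree = P.natDegree * n) := by
    intro P
    obtain ⟨bden, hbden⟩ := IsLocalization.integerNormalization_map_to_map (nonZeroDivisors ↥B) P
    set Pt := IsLocalization.integerNormalization (nonZeroDivisors ↥B) P with hPt
    have hbne : (bden : ↥B) ≠ 0 := nonZeroDivisors.coe_ne_zero bden
    have hCne : Polynomial.C (algB (bden : ↥B)) ≠ 0 := by
      rw [ne_eq, Polynomial.C_eq_zero]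
      intro h0
      exact hbne (halgBinj (by rw [h0, map_zero]))
    have hsmul : ((bden : ↥B) • P) = Polynomial.C (algB (bden : ↥B)) * P := by
      rw [← algebraMap_smul LL ((bden : ↥B)) P, Polynomial.smul_eq_C_mul]
    have hkey : θ (evB Pt) = ι (algB (bden : ↥B)) * Θ P := by
      rw [← hcomm, hbden, hsmul, map_mul, hΘC]
    refine ⟨evB Pt, bden, hbne, ?_, ?_⟩
    · rw [hkey, hιalg]; ring
    · intro hPne
      have hPtne : Pt ≠ 0 := by
        intro h0
        rw [h0, Polynomial.map_zero] at hbden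
        have h1 := hbden.symm
        rw [hsmul] at h1
        rcases mul_eq_zero.mp h1 with h | h
        · exact hCne h
        · exact hPne h
      obtain ⟨hene, hedeg⟩ := hE Pt hPtne
      refine ⟨hene, ?_⟩
      have h1 : Pt.natDegree = P.natDegree := by
        have h2 := Polynomial.natDegree_map_eq_of_injective halgBinj Pt
        rw [hbden, hsmul, Polynomial.natDegree_mul hCne hPne, Polynomial.natDegree_C] at h2
        omega
      rw [hedeg, h1]
  have hΘinj0 : ∀ P : Polynomial LL, Θ P = 0 → P = 0 := by
    intro P h0
    by_contra hne
    obtain ⟨e, s, hs, hEq, hprop⟩ := hF P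
    obtain ⟨hene, _⟩ := hprop hne
    apply hene
    apply hθinj
    rw [map_zero, ← hEq, h0, zero_mul]
  -- representation over LL
  have hrepLL : ∀ w : A, w ≠ 0 → ∃ P : Polynomial LL, P ≠ 0 ∧ Θ P = θ w ∧
      P.natDegree * n = (φ.toFun w).natDegree := by
    intro w hwne
    obtain ⟨P', s, hs, heval, hprop⟩ := hrep _ w rfl
    obtain ⟨hP'ne, hP'deg⟩ := hprop hwne
    have hsK : θ ((s : A)) ≠ 0 := fun h0 => hs (ZeroMemClass.coe_eq_zero.mp
      (hθinj (by rw [h0, map_zero])))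
    set u : LL := algB s with hu
    have hune : u ≠ 0 := fun h0 => hs (halgBinj (by rw [hu] at h0; rw [h0, map_zero]))
    have hmapne : P'.map algB ≠ 0 := by
      intro h0
      exact hP'ne (Polynomial.map_injective algB halgBinj (by rw [h0, Polynomial.map_zero]))
    refine ⟨Polynomial.C u⁻¹ * P'.map algB, ?_, ?_, ?_⟩
    · exact mul_ne_zero (by rw [ne_eq, Polynomial.C_eq_zero]; exact inv_ne_zero hune) hmapne
    · rw [map_mul, hΘC, hcomm, ← heval, map_mul, map_inv₀, hu, hιalg]
      rw [inv_mul_cancel_left₀ hsK]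
    · rw [Polynomial.natDegree_mul (by
        rw [ne_eq, Polynomial.C_eq_zero]; exact inv_ne_zero hune) hmapne,
        Polynomial.natDegree_C, zero_add,
        Polynomial.natDegree_map_eq_of_injective halgBinj, hP'deg]
  -- coprimality transfer
  have hcop : ∀ f g' : A, f ≠ 0 → g' ≠ 0 →
      Ideal.span {f} ⊓ Ideal.span {g'} = Ideal.span {f * g'} →
      ∀ Pf Pg : Polynomial LL, Θ Pf = θ f → Θ Pg = θ g' → IsCoprime Pf Pg := by
    intro f g' hf hg' hspan Pf Pg hPf hPg
    have hPfne : Pf ≠ 0 := fun h0 => hf (hθinj (by rw [← hPf, h0, map_zero, map_zero]))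
    rw [← EuclideanDomain.gcd_isUnit_iff]
    set G := EuclideanDomain.gcd Pf Pg with hG
    obtain ⟨u, hu⟩ := EuclideanDomain.gcd_dvd_left Pf Pg
    obtain ⟨v, hv⟩ := EuclideanDomain.gcd_dvd_right Pf Pg
    rw [← hG] at hu hv
    have hGne : G ≠ 0 := fun h0 => hPfne (by rw [hu, h0, zero_mul])
    have hrel : θ f * Θ v = θ g' * Θ u := by
      rw [← hPf, ← hPg, hu, hv, map_mul, map_mul]; ring
    obtain ⟨eu, su, hsu, hequ, _⟩ := hF u
    obtain ⟨ev, sv, hsv, heqv, _⟩ := hF v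
    obtain ⟨eG, sG, hsG, heqG, hGprop⟩ := hF G
    obtain ⟨heGne, heGdeg⟩ := hGprop hGne
    have h2 : f * (ev * (su : A)) = g' * (eu * (sv : A)) := by
      apply hθinj
      rw [map_mul, map_mul, map_mul, map_mul]
      rw [← heqv, ← hequ]
      linear_combination (θ ((sv : A)) * θ ((su : A))) * hrel
    have hmem : f * (ev * (su : A)) ∈ Ideal.span {f} ⊓ Ideal.span {g'} := by
      rw [Ideal.mem_inf]
      constructor
      · exact Ideal.mem_span_singleton'.mpr ⟨ev * (su : A), mul_comm _ _⟩
      · exact Ideal.mem_span_singleton'.mpr ⟨eu * (sv : A), by rw [h2]; ring⟩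
    rw [hspan] at hmem
    obtain ⟨e2, he2⟩ := Ideal.mem_span_singleton'.mp hmem
    have hev2 : ev * (su : A) = g' * e2 := by
      apply mul_left_cancel₀ hf
      rw [← he2]; ring
    have h3 : g' * ((sv : A) * (sG : A)) = eG * ev := by
      apply hθinj
      rw [map_mul, map_mul, map_mul]
      have hgG : θ g' = Θ G * Θ v := by rw [← hPg, hv, map_mul]
      rw [hgG, ← heqG, ← heqv]
      ring
    have h4 : (sv : A) * (sG : A) * (su : A) = eG * e2 := by
      apply mul_left_cancel₀ hg'
      calc g' * ((sv : A) * (sG : A) * (su : A))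
          = (g' * ((sv : A) * (sG : A))) * (su : A) := by ring
        _ = eG * ev * (su : A) := by rw [h3]
        _ = eG * (ev * (su : A)) := by ring
        _ = eG * (g' * e2) := by rw [hev2]
        _ = g' * (eG * e2) := by ring
    have hsprod : ((sv * sG * su : ↥B) : A) = (sv : A) * (sG : A) * (su : A) := by
      push_cast; ring
    have hdeg0 : (φ.toFun ((sv : A) * (sG : A) * (su : A))).natDegree = 0 := by
      apply φ.isFixed_natDegree
      rw [← hsprod]
      exact hfix (sv * sG * su)
    have hprodne : (sv : A) * (sG : A) * (su : A) ≠ 0 := by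
      apply mul_ne_zero (mul_ne_zero ?_ ?_) ?_ <;>
        · rw [ne_eq, ZeroMemClass.coe_eq_zero]; assumption
    have he2ne : e2 ≠ 0 := by
      intro h0
      rw [h0, mul_zero] at h4
      exact hprodne h4
    have hφeG : φ.toFun eG ≠ 0 := fun h0 => heGne (φ.toFun_eq_zero_iff.mp h0)
    have hφe2 : φ.toFun e2 ≠ 0 := fun h0 => he2ne (φ.toFun_eq_zero_iff.mp h0)
    have hdegsum : (φ.toFun eG).natDegree + (φ.toFun e2).natDegree = 0 := by
      have h5 : (φ.toFun (eG * e2)).natDegree = 0 := by rw [← h4]; exact hdeg0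
      rw [map_mul, Polynomial.natDegree_mul hφeG hφe2] at h5
      exact h5
    have hGdeg0 : G.natDegree = 0 := by
      have h6 : G.natDegree * n = 0 := by rw [← heGdeg]; omega
      rcases Nat.mul_eq_zero.mp h6 with h | h
      · exact h
      · exfalso; rw [hn] at h; omega
    rw [Polynomial.eq_C_of_natDegree_eq_zero hGdeg0]
    apply Polynomial.isUnit_C.mpr
    apply isUnit_iff_ne_zero.mpr
    intro h0
    apply hGne
    rw [Polynomial.eq_C_of_natDegree_eq_zero hGdeg0, h0, map_zero]
  -- characteristic of LL
  have hkB : ∀ r : k, algebraMap k A r ∈ B := fun r => B.algebraMap_mem r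
  set kB : k →+* ↥B := RingHom.codRestrict (algebraMap k A) B hkB with hkBdef
  set fLL : k →+* LL := algB.comp kB with hfLL
  haveI : CharP LL p := charP_of_injective_ringHom (RingHom.injective fLL) p
  have hcharLL : ringChar LL = p := ringChar.eq LL p
  -- apply the polynomial Fermat-Catalan theorem
  obtain ⟨Px, hPxne, hPx, hPxdeg⟩ := hrepLL x hx
  obtain ⟨Py, hPyne, hPy, hPydeg⟩ := hrepLL y hy
  obtain ⟨Pz, hPzne, hPz, hPzdeg⟩ := hrepLL z hz
  have hsum : Px ^ a + Py ^ b + Pz ^ c = 0 := by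
    apply hΘinj0
    rw [map_add, map_add, map_pow, map_pow, map_pow, hPx, hPy, hPz,
      ← map_pow, ← map_pow, ← map_pow, ← map_add, ← map_add, heq, map_zero]
  have hcopxy : IsCoprime Px Py := hcop x y hx hy hxy Px Py hPx hPy
  have hcopyz : IsCoprime Py Pz := hcop y z hy hz hyz Py Pz hPy hPz
  have hcopzx : IsCoprime Pz Px := (hcop x z hx hz hxz Px Pz hPx hPz).symm
  have hpa : ¬ ringChar LL ∣ a := by
    rw [hcharLL]
    exact fun h => hp ((h.mul_right b).mul_right c)
  have hpb : ¬ ringChar LL ∣ b := by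
    rw [hcharLL]
    intro h
    exact hp (((h.mul_left a).mul_right c))
  have hpc : ¬ ringChar LL ∣ c := by
    rw [hcharLL]
    intro h
    exact hp (h.mul_left (a * b))
  obtain ⟨hdx0, hdy0, hdz0⟩ := polyFC ha hb hc hpa hpb hpc hle _ Px Py Pz rfl
    hPxne hPyne hPzne hcopxy hcopyz hcopzx hsum
  refine ⟨φ.isFixed_of_natDegree_eq_zero ?_, φ.isFixed_of_natDegree_eq_zero ?_,
    φ.isFixed_of_natDegree_eq_zero ?_⟩
  · rw [← hPxdeg, hdx0, zero_mul]
  · rw [← hPydeg, hdy0, zero_mul]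
  · rw [← hPzdeg, hdz0, zero_mul]

end Aux

/-- Let `k` be a field of characteristic `p ≥ 0` and `A` an integral
domain containing `k`. If `x, y, z ∈ A \ {0}` are pairwise relatively prime
(`fA ∩ gA = fgA`) and `x^a + y^b + z^c = 0` with `a, b, c > 0`, `p ∤ abc` and
`1/a + 1/b + 1/c ≤ 1`, then every exponential map on `A` fixes `x`, `y`, `z`;
consequently `k[x,y,z] ⊆ ML(A)`. -/
theorem stmt0 (k : Type*) [Field k] (A : Type*) [CommRing A] [IsDomain A] [Algebra k A]
    (x y z : A) (hx : x ≠ 0) (hy : y ≠ 0) (hz : z ≠ 0)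
    (hxy : Ideal.span {x} ⊓ Ideal.span {y} = Ideal.span {x * y})
    (hyz : Ideal.span {y} ⊓ Ideal.span {z} = Ideal.span {y * z})
    (hxz : Ideal.span {x} ⊓ Ideal.span {z} = Ideal.span {x * z})
    (a b c : ℕ) (ha : 0 < a) (hb : 0 < b) (hc : 0 < c)
    (hp : ¬ ringChar k ∣ a * b * c)
    (hle : (1 : ℚ) / a + 1 / b + 1 / c ≤ 1)
    (heq : x ^ a + y ^ b + z ^ c = 0) :
    (∀ φ : ExpMap k A, φ.IsFixed x ∧ φ.IsFixed y ∧ φ.IsFixed z) ∧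
      ∀ w ∈ Algebra.adjoin k {x, y, z}, w ∈ ML k A := by
  have part1 : ∀ φ : ExpMap k A, φ.IsFixed x ∧ φ.IsFixed y ∧ φ.IsFixed z :=
    fun φ => ExpMap.fixes k A φ x y z hx hy hz hxy hyz hxz a b c ha hb hc hp hle heq
  refine ⟨part1, ?_⟩
  intro w hw φ
  have hsub : Algebra.adjoin k {x, y, z} ≤ φ.fixedSubalgebra := by
    apply Algebra.adjoin_le
    intro u hu
    simp only [Set.mem_insert_iff, Set.mem_singleton_iff] at hu
    rcases hu with rfl | rfl | rfl
    · exact (part1 φ).1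
    · exact (part1 φ).2.1
    · exact (part1 φ).2.2
  exact hsub hw
end

section
/- Let k be a field of characteristic p ≥ 0, let n ≥ 3, and let (a₁,…,a_n) ∈ ℤ_{>0}^n. Suppose either (1) a_i = 1 for some i, or (2) p > 0 and there exist distinct indices i ≠ j and r, s, e ∈ ℤ_{>0} with r ≤ e such that a_i = p^r and a_j = s·p^e. Then B_{(a₁,…,a_n)} = k[X₁,…,X_n]/(X₁^{a₁} + ⋯ + X_n^{a_n}) admits a non-trivial exponential map (i.e., it is non-rigid). -/
namespace Stmt4Proof

variable {k : Type} [Field k] {n : ℕ}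

noncomputable def gfun (k : Type) [Field k] {n : ℕ} (i j : Fin n) (m : ℕ) (l : Fin n) :
    Polynomial (MvPolynomial (Fin n) k) :=
  if l = i then
    Polynomial.C (MvPolynomial.X i) +
      (Polynomial.C (MvPolynomial.X j) ^ m
        - (Polynomial.C (MvPolynomial.X j) + Polynomial.X) ^ m)
  else if l = j then Polynomial.C (MvPolynomial.X j) + Polynomial.X
  else Polynomial.C (MvPolynomial.X l)

theorem gfun_sum (a : Fin n → ℕ) (i j : Fin n) (hij : i ≠ j) (m : ℕ)
    (key : ∀ x y u : Polynomial (MvPolynomial (Fin n) k),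
      (x + (y ^ m - (y + u) ^ m)) ^ a i + (y + u) ^ a j = x ^ a i + y ^ a j) :
    ∑ l, gfun k i j m l ^ a l
      = Polynomial.C (∑ l, MvPolynomial.X l ^ a l) := by
  rw [map_sum]
  rw [← sub_eq_zero, ← Finset.sum_sub_distrib]
  have h2 : ∀ l ∈ Finset.univ, l ∉ ({i, j} : Finset (Fin n)) →
      gfun k i j m l ^ a l - Polynomial.C (MvPolynomial.X l ^ a l) = 0 := by
    intro l _ hl
    simp only [Finset.mem_insert, Finset.mem_singleton, not_or] at hl
    simp [gfun, hl.1, hl.2, sub_self]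
  rw [← Finset.sum_subset (Finset.subset_univ ({i, j} : Finset (Fin n))) h2,
    Finset.sum_pair hij]
  simp only [gfun, if_pos rfl, if_neg (Ne.symm hij), eq_self_iff_true, if_true, map_pow]
  linear_combination key (Polynomial.C (MvPolynomial.X i))
    (Polynomial.C (MvPolynomial.X j)) Polynomial.X

variable (k) in
/-- The ideal. -/
noncomputable def II (a : Fin n → ℕ) : Ideal (MvPolynomial (Fin n) k) :=
  Ideal.span {∑ l, MvPolynomial.X l ^ a l}

variable (k) in
noncomputable abbrev Bq (a : Fin n → ℕ) : Type := MvPolynomial (Fin n) k ⧸ II k a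

variable (k) in
noncomputable def piq (a : Fin n → ℕ) : MvPolynomial (Fin n) k →ₐ[k] Bq k a :=
  Ideal.Quotient.mkₐ k (II k a)

variable (k) in
noncomputable def Psi (a : Fin n → ℕ) (i j : Fin n) (m : ℕ) :
    MvPolynomial (Fin n) k →ₐ[k] Polynomial (Bq k a) :=
  (Polynomial.mapAlgHom (piq k a)).comp (MvPolynomial.aeval (gfun k i j m))

theorem Psi_vanish (a : Fin n → ℕ) (i j : Fin n) (hij : i ≠ j) (m : ℕ)
    (key : ∀ x y u : Polynomial (MvPolynomial (Fin n) k),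
      (x + (y ^ m - (y + u) ^ m)) ^ a i + (y + u) ^ a j = x ^ a i + y ^ a j) :
    ∀ x ∈ II k a, Psi k a i j m x = 0 := by
  intro x hx
  have hF : Psi k a i j m (∑ l, MvPolynomial.X l ^ a l) = 0 := by
    have h1 : MvPolynomial.aeval (R := k) (gfun k i j m) (∑ l, MvPolynomial.X l ^ a l)
        = Polynomial.C (∑ l, MvPolynomial.X l ^ a l) := by
      rw [map_sum]
      simp only [map_pow, MvPolynomial.aeval_X]
      exact gfun_sum a i j hij m key
    have h2 : piq k a (∑ l, MvPolynomial.X l ^ a l) = 0 := by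
      simp only [piq, Ideal.Quotient.mkₐ_eq_mk]
      rw [Ideal.Quotient.eq_zero_iff_mem]
      exact Ideal.subset_span rfl
    simp only [Psi, AlgHom.comp_apply, h1, Polynomial.coe_mapAlgHom, Polynomial.map_C, AlgHom.coe_toRingHom, RingHom.coe_coe, h2,
      Polynomial.C_0]
  have hle : II k a ≤ RingHom.ker (Psi k a i j m).toRingHom := by
    simp only [II]
    rw [Ideal.span_le, Set.singleton_subset_iff]
    show Psi k a i j m _ = 0
    exact hF
  exact hle hx

noncomputable def phi0 (a : Fin n → ℕ) (i j : Fin n) (hij : i ≠ j) (m : ℕ)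
    (key : ∀ x y u : Polynomial (MvPolynomial (Fin n) k),
      (x + (y ^ m - (y + u) ^ m)) ^ a i + (y + u) ^ a j = x ^ a i + y ^ a j) :
    Bq k a →ₐ[k] Polynomial (Bq k a) :=
  Ideal.Quotient.liftₐ (II k a) (Psi k a i j m) (Psi_vanish a i j hij m key)

theorem phi0_mk (a : Fin n → ℕ) (i j : Fin n) (hij : i ≠ j) (m : ℕ) (key) (x) :
    phi0 a i j hij m key (Ideal.Quotient.mk (II k a) x) = Psi k a i j m x := by
  simp [phi0, Ideal.Quotient.liftₐ_apply, Ideal.Quotient.lift_mk]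
  rfl

theorem phi0_X (a : Fin n → ℕ) (i j : Fin n) (hij : i ≠ j) (m : ℕ) (key) (l : Fin n) :
    phi0 a i j hij m key (Ideal.Quotient.mk (II k a) (MvPolynomial.X l))
      = Polynomial.map (piq k a).toRingHom (gfun k i j m l) := by
  rw [phi0_mk]
  simp only [Psi, AlgHom.comp_apply, MvPolynomial.aeval_X]
  rfl



theorem phi0_X_i (a : Fin n → ℕ) (i j : Fin n) (hij : i ≠ j) (m : ℕ) (key) :
    phi0 a i j hij m key (Ideal.Quotient.mk (II k a) (MvPolynomial.X i))
      = Polynomial.C (Ideal.Quotient.mk (II k a) (MvPolynomial.X i)) +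
        (Polynomial.C (Ideal.Quotient.mk (II k a) (MvPolynomial.X j)) ^ m
          - (Polynomial.C (Ideal.Quotient.mk (II k a) (MvPolynomial.X j)) + Polynomial.X) ^ m) := by
  rw [phi0_X]
  simp [gfun, piq]

theorem phi0_X_j (a : Fin n → ℕ) (i j : Fin n) (hij : i ≠ j) (m : ℕ) (key) :
    phi0 a i j hij m key (Ideal.Quotient.mk (II k a) (MvPolynomial.X j))
      = Polynomial.C (Ideal.Quotient.mk (II k a) (MvPolynomial.X j)) + Polynomial.X := by
  rw [phi0_X]
  simp [gfun, Ne.symm hij, piq]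

theorem phi0_X_other (a : Fin n → ℕ) (i j : Fin n) (hij : i ≠ j) (m : ℕ) (key)
    (l : Fin n) (hli : l ≠ i) (hlj : l ≠ j) :
    phi0 a i j hij m key (Ideal.Quotient.mk (II k a) (MvPolynomial.X l))
      = Polynomial.C (Ideal.Quotient.mk (II k a) (MvPolynomial.X l)) := by
  rw [phi0_X]
  simp [gfun, hli, hlj, piq]

theorem phi0_C (a : Fin n → ℕ) (i j : Fin n) (hij : i ≠ j) (m : ℕ) (key) (r : k) :
    phi0 a i j hij m key (Ideal.Quotient.mk (II k a) (MvPolynomial.C r))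
      = Polynomial.C (Ideal.Quotient.mk (II k a) (MvPolynomial.C r)) := by
  rw [phi0_mk]
  simp [Psi, MvPolynomial.aeval_C, Polynomial.algebraMap_apply, piq,
    MvPolynomial.algebraMap_eq]
  rfl

noncomputable def ev0 (a : Fin n → ℕ) : Polynomial (Bq k a) →ₐ[k] Bq k a where
  toRingHom := Polynomial.evalRingHom 0
  commutes' := by
    intro r
    simp [Polynomial.algebraMap_apply]

theorem ev0_apply (a : Fin n → ℕ) (q : Polynomial (Bq k a)) :
    ev0 a q = q.eval 0 := rfl

theorem mainAux (a : Fin n → ℕ) (hpos : ∀ l, 0 < a l) (i j : Fin n) (hij : i ≠ j) (m : ℕ)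
    (key : ∀ x y u : Polynomial (MvPolynomial (Fin n) k),
      (x + (y ^ m - (y + u) ^ m)) ^ a i + (y + u) ^ a j = x ^ a i + y ^ a j) :
    ∃ φ : ExpMap k (Bq k a), φ.IsNontrivial := by
  have hne : II k a ≠ ⊤ := by
    intro hT
    have hker : II k a ≤ RingHom.ker
        ((MvPolynomial.aeval (R := k) (fun _ : Fin n => (0 : k))).toRingHom) := by
      simp only [II]
      rw [Ideal.span_le, Set.singleton_subset_iff]
      show MvPolynomial.aeval (R := k) (fun _ : Fin n => (0 : k)) _ = 0
      rw [map_sum]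
      refine Finset.sum_eq_zero fun l _ => ?_
      simp [zero_pow (hpos l).ne']
    have h1 : (1 : MvPolynomial (Fin n) k) ∈ II k a := hT ▸ Submodule.mem_top
    have h2 := hker h1
    simp [RingHom.mem_ker] at h2
  haveI : Nontrivial (Bq k a) := Ideal.Quotient.nontrivial_iff.mpr hne
  refine ⟨⟨phi0 a i j hij m key, ?_, ?_⟩, ?_⟩
  · -- eval_zero
    intro b
    have H : (ev0 a).comp (phi0 a i j hij m key) = AlgHom.id k (Bq k a) := by
      apply Ideal.Quotient.algHom_ext
      apply MvPolynomial.algHom_ext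
      intro l
      simp only [AlgHom.comp_apply, Ideal.Quotient.mkₐ_eq_mk, AlgHom.id_apply]
      rcases eq_or_ne l i with rfl | hli
      · rw [phi0_X_i a l j hij m key]
        simp [ev0_apply]
      rcases eq_or_ne l j with rfl | hlj
      · rw [phi0_X_j a i l hij m key]
        simp [ev0_apply]
      · rw [phi0_X_other a i j hij m key l hli hlj]
        simp [ev0_apply]
    have := AlgHom.congr_fun H b
    simpa [ev0_apply] using this
  · -- comp
    intro b
    letI : CommSemiring (Polynomial (Polynomial (Bq k a))) :=
      @Polynomial.commSemiring (Polynomial (Bq k a))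
        (@Polynomial.commSemiring (Bq k a) (Ideal.Quotient.commSemiring (II k a)))
    have H2 : (Polynomial.mapRingHom
          ((phi0 a i j hij m key : Bq k a →ₐ[k] Polynomial (Bq k a)) :
            Bq k a →+* Polynomial (Bq k a))).comp
          ((phi0 a i j hij m key : Bq k a →ₐ[k] Polynomial (Bq k a)) :
            Bq k a →+* Polynomial (Bq k a))
        = (Polynomial.eval₂RingHom (S := Polynomial (Polynomial (Bq k a)))
            (Polynomial.C.comp Polynomial.C)
            (Polynomial.X + Polynomial.C Polynomial.X)).comp
          ((phi0 a i j hij m key : Bq k a →ₐ[k] Polynomial (Bq k a)) :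
            Bq k a →+* Polynomial (Bq k a)) := by
      apply Ideal.Quotient.ringHom_ext
      apply MvPolynomial.ringHom_ext
      · intro r
        simp only [RingHom.comp_apply, RingHom.coe_coe]
        rw [phi0_C a i j hij m key r]
        simp only [Polynomial.coe_mapRingHom, Polynomial.map_C, RingHom.coe_coe,
          Polynomial.coe_eval₂RingHom, Polynomial.eval₂_C, RingHom.comp_apply]
        rw [phi0_C a i j hij m key r]
      · intro l
        simp only [RingHom.comp_apply, RingHom.coe_coe, Polynomial.coe_mapRingHom,
          Polynomial.coe_eval₂RingHom]
        rcases eq_or_ne l i with rfl | hli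
        · rw [phi0_X_i a l j hij m key]
          simp only [Polynomial.map_add, Polynomial.map_sub, Polynomial.map_pow,
            Polynomial.map_C, Polynomial.map_X, Polynomial.eval₂_add, Polynomial.eval₂_sub,
            Polynomial.eval₂_pow, Polynomial.eval₂_C, Polynomial.eval₂_X, RingHom.coe_comp,
            Function.comp_apply, RingHom.coe_coe]
          rw [phi0_X_i a l j hij m key, phi0_X_j a l j hij m key]
          simp only [map_add, map_sub, map_pow]
          rw [add_assoc, sub_add_sub_cancel, add_comm (Polynomial.X : Polynomial (Polynomial (Bq k a))), add_assoc]
        rcases eq_or_ne l j with rfl | hlj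
        · rw [phi0_X_j a i l hij m key]
          simp only [Polynomial.map_add, Polynomial.map_C, Polynomial.map_X,
            Polynomial.eval₂_add, Polynomial.eval₂_C, Polynomial.eval₂_X, RingHom.coe_comp,
            Function.comp_apply, RingHom.coe_coe]
          rw [phi0_X_j a i l hij m key]
          simp only [map_add]
          ring
        · rw [phi0_X_other a i j hij m key l hli hlj]
          simp only [Polynomial.map_C, Polynomial.eval₂_C, RingHom.coe_comp,
            Function.comp_apply, RingHom.coe_coe]
          rw [phi0_X_other a i j hij m key l hli hlj]
    have h3 := RingHom.congr_fun H2 b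
    simpa [Polynomial.coe_mapRingHom, Polynomial.coe_eval₂RingHom] using h3
  · -- nontrivial
    refine ⟨Ideal.Quotient.mk (II k a) (MvPolynomial.X j), ?_⟩
    intro hfix
    rw [ExpMap.IsFixed] at hfix
    simp only at hfix
    rw [phi0_X_j a i j hij m key] at hfix
    have hX : (Polynomial.X : Polynomial (Bq k a)) = 0 := by
      have := add_eq_left.mp hfix
      exact this
    exact Polynomial.X_ne_zero hX

end Stmt4Proof

/-- **Theorem B(i).** Let `k` be a field of characteristic `p ≥ 0`,
`n ≥ 3`, `(a₁,…,a_n) ∈ ℤ_{>0}^n`. If some `a_i = 1`, or `p > 0` and two distinct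
entries are of the form `p^r` and `s·p^e` with `r, s, e ∈ ℤ_{>0}`, `r ≤ e`, then
`B_{(a₁,…,a_n)} = k[X₁,…,X_n]/(X₁^{a₁} + ⋯ + X_n^{a_n})` admits a non-trivial
exponential map. -/
theorem stmt4 (k : Type) [Field k] (p : ℕ) (hchar : ringChar k = p)
    (n : ℕ) (hn : 3 ≤ n) (a : Fin n → ℕ) (hpos : ∀ i, 0 < a i)
    (h : (∃ i, a i = 1) ∨
      (0 < p ∧ ∃ i j : Fin n, i ≠ j ∧ ∃ r s e : ℕ, 0 < r ∧ 0 < s ∧ 0 < e ∧ r ≤ e ∧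
        a i = p ^ r ∧ a j = s * p ^ e)) :
    ∃ φ : ExpMap k (MvPolynomial (Fin n) k ⧸ (Ideal.span
      {∑ i, MvPolynomial.X i ^ a i} : Ideal (MvPolynomial (Fin n) k))),
      φ.IsNontrivial := by
  rcases h with ⟨i, hi⟩ | ⟨hp, i, j, hij, r, s, e, hr, hs, he, hre, hai, haj⟩
  · haveI : Nontrivial (Fin n) :=
      ⟨⟨⟨0, by omega⟩, ⟨1, by omega⟩, by simp [Fin.ext_iff]⟩⟩
    obtain ⟨j, hj⟩ := exists_ne i
    refine Stmt4Proof.mainAux a hpos i j (Ne.symm hj) (a j) ?_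
    intro x y u
    simp only [hi, pow_one]
    ring
  · haveI : CharP k p := hchar ▸ ringChar.charP k
    haveI : NeZero p := ⟨hp.ne'⟩
    haveI : Fact p.Prime := CharP.char_is_prime_of_pos k p
    haveI : CharP (Polynomial (MvPolynomial (Fin n) k)) p :=
      charP_of_injective_algebraMap
        (algebraMap k (Polynomial (MvPolynomial (Fin n) k))).injective p
    refine Stmt4Proof.mainAux a hpos i j hij (s * p ^ (e - r)) ?_
    intro x y u
    have hm : s * p ^ (e - r) * p ^ r = s * p ^ e := by
      rw [mul_assoc, ← pow_add, Nat.sub_add_cancel hre]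
    rw [hai, haj, ← hm, pow_mul y, pow_mul (y + u), add_pow_char_pow, sub_pow_char_pow]
    ring
end

section
/- Let k be a field of characteristic p ≥ 0, let n ≥ 3, let (a₁,…,a_n) ∈ ℤ_{>0}^n, and let m > 1 be an integer. Then the ring A := k[X₁,…,X_n]/((X₁^{a₁} + ⋯ + X_n^{a_n})^m) admits a non-trivial exponential map (i.e., it is non-rigid). In particular, if p > 0 and p divides gcd(a₁,…,a_n), then k[X₁,…,X_n]/(X₁^{a₁} + ⋯ + X_n^{a_n}) is non-rigid. -/
lemma sq_zero_pow {A : Type*} [CommRing A] (y z : A) (h : z * z = 0) (e : ℕ) :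
    (y + z) ^ e = y ^ e + e * y ^ (e - 1) * z := by
  induction e with
  | zero => simp
  | succ e ih =>
    rcases Nat.eq_zero_or_pos e with he | he
    · subst he; simp
    · have h1 : y ^ (e - 1) * y = y ^ e := by
        rw [← pow_succ]; congr 1; omega
      have h2 : (e : ℕ) + 1 - 1 = e := by omega
      calc (y + z) ^ (e + 1) = ((y + z) ^ e) * (y + z) := by ring
        _ = (y ^ e + e * y ^ (e - 1) * z) * (y + z) := by rw [ih]
        _ = y ^ (e + 1) + (e : A) * (y ^ (e - 1) * y) * z + y ^ e * z
            + ((e : A) * y ^ (e - 1)) * (z * z) := by ring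
        _ = y ^ (e + 1) + ((e : ℕ) + 1 : ℕ) * y ^ ((e + 1) - 1) * z := by
            rw [h1, h, h2]; push_cast; ring

lemma C_add_C_mul_X_pow {A : Type*} [CommRing A] (x c : A) (hc : c * c = 0) (e : ℕ) :
    (Polynomial.C x + Polynomial.C c * Polynomial.X) ^ e
      = Polynomial.C (x ^ e) + Polynomial.C ((e : A) * x ^ (e - 1) * c) * Polynomial.X := by
  have hz : (Polynomial.C c * Polynomial.X) * (Polynomial.C c * Polynomial.X) = 0 := by
    rw [mul_mul_mul_comm, ← Polynomial.C_mul, hc, map_zero, zero_mul]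
  rw [sq_zero_pow _ _ hz]
  simp only [Polynomial.C_mul, Polynomial.C_pow, map_natCast]
  ring

set_option maxHeartbeats 1000000
set_option synthInstance.maxHeartbeats 400000

namespace Stmt6Aux

noncomputable section Defs

variable (k : Type) [Field k] (n : ℕ) (a : Fin n → ℕ) (m : ℕ) (i₀ j₀ : Fin n)

def ff : MvPolynomial (Fin n) k := ∑ i, MvPolynomial.X i ^ a i

def II : Ideal (MvPolynomial (Fin n) k) := Ideal.span {ff k n a ^ m}

abbrev AA : Type := MvPolynomial (Fin n) k ⧸ II k n a m

def mkq : MvPolynomial (Fin n) k →+* AA k n a m := Ideal.Quotient.mk _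

def xx (i : Fin n) : AA k n a m := mkq k n a m (MvPolynomial.X i)

def ww : AA k n a m := mkq k n a m (ff k n a ^ (m - 1))

def ee (i : Fin n) : AA k n a m :=
  if i = i₀ then (a j₀ : AA k n a m) * xx k n a m j₀ ^ (a j₀ - 1)
  else if i = j₀ then -((a i₀ : AA k n a m) * xx k n a m i₀ ^ (a i₀ - 1)) else 0

def cc (i : Fin n) : AA k n a m := ee k n a m i₀ j₀ i * ww k n a m

def gg (i : Fin n) : Polynomial (AA k n a m) :=
  Polynomial.C (xx k n a m i) + Polynomial.C (cc k n a m i₀ j₀ i) * Polynomial.X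

def ψψ : MvPolynomial (Fin n) k →ₐ[k] Polynomial (AA k n a m) :=
  MvPolynomial.aeval (gg k n a m i₀ j₀)

end Defs

variable (k : Type) [Field k] (n : ℕ) (a : Fin n → ℕ) {m : ℕ} (i₀ j₀ : Fin n)

lemma hmk0 (m : ℕ) : mkq k n a m (ff k n a ^ m) = 0 :=
  Ideal.Quotient.eq_zero_iff_mem.mpr (Ideal.subset_span rfl)

variable (hm : 1 < m)
include hm

lemma hww : ww k n a m * ww k n a m = 0 := by
  have h1 : ff k n a ^ (m - 1) * ff k n a ^ (m - 1) = ff k n a ^ m * ff k n a ^ (m - 2) := by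
    rw [← pow_add, ← pow_add]; congr 1; omega
  show mkq k n a m _ * mkq k n a m _ = 0
  rw [← map_mul, h1, map_mul, hmk0, zero_mul]

lemma hcc (i j : Fin n) : cc k n a m i₀ j₀ i * cc k n a m i₀ j₀ j = 0 := by
  have h1 : cc k n a m i₀ j₀ i * cc k n a m i₀ j₀ j
      = (ee k n a m i₀ j₀ i * ee k n a m i₀ j₀ j) * (ww k n a m * ww k n a m) := by
    simp only [cc]; ring
  rw [h1, hww k n a hm, mul_zero]

lemma hcw (i : Fin n) : cc k n a m i₀ j₀ i * ww k n a m = 0 := by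
  have h1 : cc k n a m i₀ j₀ i * ww k n a m
      = ee k n a m i₀ j₀ i * (ww k n a m * ww k n a m) := by
    simp only [cc]; ring
  rw [h1, hww k n a hm, mul_zero]

lemma hgpow (i : Fin n) (t : ℕ) :
    gg k n a m i₀ j₀ i ^ t = Polynomial.C (xx k n a m i ^ t)
      + Polynomial.C ((t : AA k n a m) * xx k n a m i ^ (t - 1) * cc k n a m i₀ j₀ i)
        * Polynomial.X :=
  C_add_C_mul_X_pow _ _ (hcc k n a i₀ j₀ hm i i) t

omit hm in
lemma hsum (hne : j₀ ≠ i₀) :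
    ∑ i, (a i : AA k n a m) * xx k n a m i ^ (a i - 1) * cc k n a m i₀ j₀ i = 0 := by
  classical
  rw [← Finset.sum_subset (Finset.subset_univ {i₀, j₀})]
  · rw [Finset.sum_pair (Ne.symm hne)]
    simp only [cc, ee, hne, if_true, if_false, ite_true, ite_false, eq_self_iff_true]
    ring
  · intro i _ hi
    simp only [Finset.mem_insert, Finset.mem_singleton, not_or] at hi
    simp only [cc, ee, if_neg hi.1, if_neg hi.2, zero_mul, mul_zero]

omit hm in
lemma hψX (i : Fin n) :
    ψψ k n a m i₀ j₀ (MvPolynomial.X i) = gg k n a m i₀ j₀ i :=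
  MvPolynomial.aeval_X _ i

set_option synthInstance.maxHeartbeats 400000 in
lemma hψf (hne : j₀ ≠ i₀) :
    ψψ k n a m i₀ j₀ (ff k n a) = Polynomial.C (mkq k n a m (ff k n a)) := by
  have h2 : mkq k n a m (∑ i, MvPolynomial.X i ^ a i) = ∑ i, xx k n a m i ^ a i := by
    simp only [map_sum, map_pow]; rfl
  rw [show (ff k n a) = ∑ i, MvPolynomial.X i ^ a i from rfl, map_sum]
  simp only [map_pow, hψX]
  rw [Finset.sum_congr rfl (fun i _ => hgpow k n a i₀ j₀ hm i (a i)), Finset.sum_add_distrib,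
    ← Finset.sum_mul, ← map_sum, ← map_sum, hsum k n a i₀ j₀ hne, map_zero, zero_mul, add_zero,
    h2]


lemma hψfm (hne : j₀ ≠ i₀) : ψψ k n a m i₀ j₀ (ff k n a ^ m) = 0 := by
  rw [map_pow, hψf k n a i₀ j₀ hm hne, ← map_pow, ← map_pow, hmk0, map_zero]

lemma hI0 (hne : j₀ ≠ i₀) : ∀ r ∈ II k n a m, ψψ k n a m i₀ j₀ r = 0 := by
  intro r hr
  rw [II, Ideal.mem_span_singleton] at hr
  obtain ⟨t, rfl⟩ := hr
  rw [map_mul, hψfm k n a i₀ j₀ hm hne, zero_mul]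

noncomputable def φφ (hne : j₀ ≠ i₀) : AA k n a m →ₐ[k] Polynomial (AA k n a m) :=
  Ideal.Quotient.liftₐ (II k n a m) (ψψ k n a m i₀ j₀) (hI0 k n a i₀ j₀ hm hne)

variable (hne : j₀ ≠ i₀)

lemma hφmk (r : MvPolynomial (Fin n) k) :
    φφ k n a i₀ j₀ hm hne (mkq k n a m r) = ψψ k n a m i₀ j₀ r := by
  rw [φφ, show mkq k n a m r = Ideal.Quotient.mk (II k n a m) r from rfl,
    Ideal.Quotient.liftₐ_apply]
  rfl

lemma hφx (i : Fin n) :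
    φφ k n a i₀ j₀ hm hne (xx k n a m i) = gg k n a m i₀ j₀ i := by
  rw [xx, hφmk, hψX]

lemma hφw : φφ k n a i₀ j₀ hm hne (ww k n a m) = Polynomial.C (ww k n a m) := by
  rw [ww, hφmk, map_pow, hψf k n a i₀ j₀ hm hne, ← map_pow, ← map_pow]

lemma hφnat (t : ℕ) :
    φφ k n a i₀ j₀ hm hne ((t : AA k n a m)) = Polynomial.C ((t : AA k n a m)) := by
  rw [map_natCast, Polynomial.C_eq_natCast]

omit hm in
lemma ee_at_i₀ : ee k n a m i₀ j₀ i₀ = (a j₀ : AA k n a m) * xx k n a m j₀ ^ (a j₀ - 1) := by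
  simp [ee]

omit hm in
lemma ee_at_j₀ (hne' : j₀ ≠ i₀) : ee k n a m i₀ j₀ j₀
    = -((a i₀ : AA k n a m) * xx k n a m i₀ ^ (a i₀ - 1)) := by
  simp only [ee]; rw [if_neg hne']; simp

omit hm hne in
lemma ee_other {i : Fin n} (h1 : i ≠ i₀) (h2 : i ≠ j₀) : ee k n a m i₀ j₀ i = 0 := by
  simp only [ee]; rw [if_neg h1, if_neg h2]

lemma hφe (i : Fin n) : ∃ s, φφ k n a i₀ j₀ hm hne (ee k n a m i₀ j₀ i)
    = Polynomial.C (ee k n a m i₀ j₀ i) + Polynomial.C s * Polynomial.X ∧ s * ww k n a m = 0 := by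
  by_cases h1 : i = i₀
  · subst h1
    refine ⟨(a j₀ : AA k n a m) * ((a j₀ - 1 : ℕ) * xx k n a m j₀ ^ (a j₀ - 1 - 1)
        * cc k n a m i j₀ j₀), ?_, ?_⟩
    · rw [ee_at_i₀, map_mul, hφnat, map_pow, hφx, hgpow k n a i j₀ hm]
      simp only [Polynomial.C_mul, Polynomial.C_pow, map_natCast]
      ring
    · have h3 : (a j₀ : AA k n a m) * ((a j₀ - 1 : ℕ) * xx k n a m j₀ ^ (a j₀ - 1 - 1)
          * cc k n a m i j₀ j₀) * ww k n a m
          = (a j₀ : AA k n a m) * ((a j₀ - 1 : ℕ) * xx k n a m j₀ ^ (a j₀ - 1 - 1))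
            * (cc k n a m i j₀ j₀ * ww k n a m) := by ring
      rw [h3, hcw k n a i j₀ hm, mul_zero]
  · by_cases h2 : i = j₀
    · subst h2
      refine ⟨-((a i₀ : AA k n a m) * ((a i₀ - 1 : ℕ) * xx k n a m i₀ ^ (a i₀ - 1 - 1)
          * cc k n a m i₀ i i₀)), ?_, ?_⟩
      · rw [ee_at_j₀ k n a i₀ i hne, map_neg, map_mul, hφnat, map_pow, hφx,
          hgpow k n a i₀ i hm]
        simp only [Polynomial.C_mul, Polynomial.C_pow, map_natCast, map_neg]
        ring
      · have h3 : -((a i₀ : AA k n a m) * ((a i₀ - 1 : ℕ) * xx k n a m i₀ ^ (a i₀ - 1 - 1)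
            * cc k n a m i₀ i i₀)) * ww k n a m
            = -((a i₀ : AA k n a m) * ((a i₀ - 1 : ℕ) * xx k n a m i₀ ^ (a i₀ - 1 - 1)))
              * (cc k n a m i₀ i i₀ * ww k n a m) := by ring
        rw [h3, hcw k n a i₀ i hm, mul_zero]
    · refine ⟨0, ?_, by rw [zero_mul]⟩
      rw [ee_other k n a i₀ j₀ h1 h2, map_zero]
      simp

lemma hφc (i : Fin n) : φφ k n a i₀ j₀ hm hne (cc k n a m i₀ j₀ i)
    = Polynomial.C (cc k n a m i₀ j₀ i) := by
  obtain ⟨s, hs1, hs2⟩ := hφe k n a i₀ j₀ hm hne i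
  rw [cc, map_mul, hs1, hφw]
  rw [add_mul, ← Polynomial.C_mul]
  have h5 : Polynomial.C s * Polynomial.C (ww k n a m) = 0 := by
    rw [← Polynomial.C_mul, hs2, map_zero]
  linear_combination Polynomial.X * h5


omit hm hne in
lemma mkq_C (r : k) : mkq k n a m (MvPolynomial.C r) = algebraMap k (AA k n a m) r := by
  have h1 : (MvPolynomial.C r : MvPolynomial (Fin n) k) = algebraMap k _ r := rfl
  rw [h1]
  exact (Ideal.Quotient.mkₐ k (II k n a m)).commutes r

omit hm hne in
lemma ψψ_C (r : k) : ψψ k n a m i₀ j₀ (MvPolynomial.C r)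
    = Polynomial.C (algebraMap k (AA k n a m) r) := by
  rw [ψψ, MvPolynomial.aeval_C, Polynomial.algebraMap_apply]

omit hm hne in
lemma hev0 (r : MvPolynomial (Fin n) k) :
    (ψψ k n a m i₀ j₀ r).eval 0 = mkq k n a m r := by
  induction r using MvPolynomial.induction_on with
  | C r => rw [ψψ_C, Polynomial.eval_C, mkq_C]
  | add p q hp hq => rw [map_add, Polynomial.eval_add, hp, hq, map_add]
  | mul_X p i hp =>
      rw [map_mul, Polynomial.eval_mul, hp, hψX, map_mul]
      simp [gg, xx]

lemma hev (b : AA k n a m) : (φφ k n a i₀ j₀ hm hne b).eval 0 = b := by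
  obtain ⟨r, rfl⟩ := Ideal.Quotient.mk_surjective (I := II k n a m) b
  have h1 : Ideal.Quotient.mk (II k n a m) r = mkq k n a m r := rfl
  rw [h1, hφmk, hev0]

lemma hcompat0 (r : MvPolynomial (Fin n) k) :
    Polynomial.map (φφ k n a i₀ j₀ hm hne : AA k n a m →+* Polynomial (AA k n a m))
        (ψψ k n a m i₀ j₀ r)
      = Polynomial.eval₂ (Polynomial.C.comp Polynomial.C)
          (Polynomial.X + Polynomial.C Polynomial.X) (ψψ k n a m i₀ j₀ r) := by
  induction r using MvPolynomial.induction_on with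
  | C r =>
      rw [ψψ_C, Polynomial.map_C, Polynomial.eval₂_C]
      rw [show ((φφ k n a i₀ j₀ hm hne : AA k n a m →+* Polynomial (AA k n a m))
            (algebraMap k (AA k n a m) r)) = algebraMap k (Polynomial (AA k n a m)) r
          from (φφ k n a i₀ j₀ hm hne).commutes r]
      rw [Polynomial.algebraMap_apply]
      rfl
  | add p q hp hq =>
      rw [map_add, Polynomial.map_add, Polynomial.eval₂_add, hp, hq]
  | mul_X p i hp =>
      rw [map_mul, Polynomial.map_mul]
      rw [show Polynomial.eval₂ (Polynomial.C.comp Polynomial.C) (Polynomial.X + Polynomial.C Polynomial.X)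
          (ψψ k n a m i₀ j₀ p * ψψ k n a m i₀ j₀ (MvPolynomial.X i))
          = Polynomial.eval₂ (Polynomial.C.comp Polynomial.C) (Polynomial.X + Polynomial.C Polynomial.X) (ψψ k n a m i₀ j₀ p)
            * Polynomial.eval₂ (Polynomial.C.comp Polynomial.C) (Polynomial.X + Polynomial.C Polynomial.X) (ψψ k n a m i₀ j₀ (MvPolynomial.X i))
          from by
            letI : CommRing (AA k n a m) := Ideal.Quotient.commRing _
            exact Polynomial.eval₂_mul (R := AA k n a m)
              (S := Polynomial (Polynomial (AA k n a m))) _ _]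
      rw [hp, hψX]
      congr 1
      rw [show gg k n a m i₀ j₀ i
          = Polynomial.C (xx k n a m i) + Polynomial.C (cc k n a m i₀ j₀ i) * Polynomial.X
          from rfl]
      rw [Polynomial.map_add, Polynomial.map_mul, Polynomial.map_C, Polynomial.map_C,
        Polynomial.map_X, Polynomial.eval₂_add]
      rw [show Polynomial.eval₂ (Polynomial.C.comp Polynomial.C) (Polynomial.X + Polynomial.C Polynomial.X)
          (Polynomial.C (cc k n a m i₀ j₀ i) * Polynomial.X)
          = Polynomial.eval₂ (Polynomial.C.comp Polynomial.C) (Polynomial.X + Polynomial.C Polynomial.X) (Polynomial.C (cc k n a m i₀ j₀ i))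
            * Polynomial.eval₂ (Polynomial.C.comp Polynomial.C) (Polynomial.X + Polynomial.C Polynomial.X) Polynomial.X
          from by
            letI : CommRing (AA k n a m) := Ideal.Quotient.commRing _
            exact Polynomial.eval₂_mul (R := AA k n a m)
              (S := Polynomial (Polynomial (AA k n a m))) _ _]
      rw [Polynomial.eval₂_C,
        Polynomial.eval₂_C, Polynomial.eval₂_X]
      rw [show (φφ k n a i₀ j₀ hm hne : AA k n a m →+* Polynomial (AA k n a m)) (xx k n a m i)
          = gg k n a m i₀ j₀ i from hφx k n a i₀ j₀ hm hne i]
      rw [show (φφ k n a i₀ j₀ hm hne : AA k n a m →+* Polynomial (AA k n a m))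
            (cc k n a m i₀ j₀ i) = Polynomial.C (cc k n a m i₀ j₀ i)
          from hφc k n a i₀ j₀ hm hne i]
      rw [show gg k n a m i₀ j₀ i
          = Polynomial.C (xx k n a m i) + Polynomial.C (cc k n a m i₀ j₀ i) * Polynomial.X
          from rfl]
      simp only [RingHom.coe_comp, Function.comp_apply, map_add, map_mul]
      letI : CommRing (AA k n a m) := Ideal.Quotient.commRing _
      ring

lemma hcompat (b : AA k n a m) :
    Polynomial.map (φφ k n a i₀ j₀ hm hne : AA k n a m →+* Polynomial (AA k n a m))
        (φφ k n a i₀ j₀ hm hne b)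
      = Polynomial.eval₂ (Polynomial.C.comp Polynomial.C)
          (Polynomial.X + Polynomial.C Polynomial.X) (φφ k n a i₀ j₀ hm hne b) := by
  obtain ⟨r, rfl⟩ := Ideal.Quotient.mk_surjective (I := II k n a m) b
  have h1 : Ideal.Quotient.mk (II k n a m) r = mkq k n a m r := rfl
  rw [h1, hφmk, hcompat0]

omit hm hne in
lemma hnontriv (hpos : ∀ i, 0 < a i) (hm' : 1 < m) (ha : (a i₀ : k) ≠ 0) (hne' : j₀ ≠ i₀) :
    cc k n a m i₀ j₀ j₀ ≠ 0 := by
  intro h0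
  rw [cc, ee_at_j₀ k n a i₀ j₀ hne'] at h0
  have h0' : (a i₀ : AA k n a m) * xx k n a m i₀ ^ (a i₀ - 1) * ww k n a m = 0 := by
    linear_combination -h0
  have h1 : mkq k n a m ((a i₀ : MvPolynomial (Fin n) k) * MvPolynomial.X i₀ ^ (a i₀ - 1)
      * ff k n a ^ (m - 1)) = 0 := by
    rw [map_mul, map_mul, map_natCast, map_pow]
    exact h0'
  have h2 : ff k n a ^ m ∣ (a i₀ : MvPolynomial (Fin n) k) * MvPolynomial.X i₀ ^ (a i₀ - 1)
      * ff k n a ^ (m - 1) := by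
    rw [← Ideal.mem_span_singleton]
    have h2' := Ideal.Quotient.eq_zero_iff_mem.mp h1
    rwa [II] at h2'
  set σ : MvPolynomial (Fin n) k →ₐ[k] Polynomial k :=
    MvPolynomial.aeval (fun t : Fin n => if t = i₀ then (Polynomial.X : Polynomial k) else 0)
    with hσ
  have hσf : σ (ff k n a) = Polynomial.X ^ (a i₀) := by
    rw [ff, map_sum, Finset.sum_eq_single i₀]
    · rw [map_pow, hσ, MvPolynomial.aeval_X, if_pos rfl]
    · intro i _ hi
      rw [map_pow, hσ, MvPolynomial.aeval_X, if_neg hi, zero_pow (hpos i).ne']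
    · intro h
      exact absurd (Finset.mem_univ i₀) h
  have h3 := map_dvd σ h2
  rw [map_pow, hσf, map_mul, map_mul, map_natCast, map_pow, hσ, MvPolynomial.aeval_X,
    if_pos rfl, map_pow, hσf, ← pow_mul] at h3
  have h4 : ((a i₀ : ℕ) : Polynomial k) * Polynomial.X ^ (a i₀ - 1)
      * (Polynomial.X ^ (a i₀)) ^ (m - 1)
      = Polynomial.C ((a i₀ : k)) * Polynomial.X ^ (a i₀ - 1 + a i₀ * (m - 1)) := by
    rw [← Polynomial.C_eq_natCast, ← pow_mul, mul_assoc, ← pow_add]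
  rw [h4] at h3
  have hne0 : Polynomial.C ((a i₀ : k)) * Polynomial.X ^ (a i₀ - 1 + a i₀ * (m - 1)) ≠ 0 :=
    mul_ne_zero (Polynomial.C_ne_zero.mpr ha) (pow_ne_zero _ Polynomial.X_ne_zero)
  have h5 := Polynomial.natDegree_le_of_dvd h3 hne0
  rw [Polynomial.natDegree_X_pow, Polynomial.natDegree_C_mul_X_pow _ _ ha] at h5
  obtain ⟨m', rfl⟩ : ∃ m', m = m' + 1 := ⟨m - 1, by omega⟩
  rw [Nat.mul_succ] at h5
  simp only [Nat.add_sub_cancel] at h5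
  have h6 := hpos i₀
  omega


omit hm hne in
lemma exists_expmap (hpos : ∀ i, 0 < a i) (hm' : 1 < m) (hne' : j₀ ≠ i₀)
    (ha : (a i₀ : k) ≠ 0) :
    ∃ φ : ExpMap k (MvPolynomial (Fin n) k ⧸ (Ideal.span
        {(∑ i, MvPolynomial.X i ^ a i) ^ m} : Ideal (MvPolynomial (Fin n) k))),
      φ.IsNontrivial := by
  refine ⟨⟨φφ k n a i₀ j₀ hm' hne', hev k n a i₀ j₀ hm' hne',
    hcompat k n a i₀ j₀ hm' hne'⟩, ⟨xx k n a m j₀, ?_⟩⟩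
  intro hfix
  have h1 : gg k n a m i₀ j₀ j₀ = Polynomial.C (xx k n a m j₀) := by
    rw [← hφx k n a i₀ j₀ hm' hne' j₀]
    exact hfix
  have h2 := congrArg (fun q => Polynomial.coeff q 1) h1
  simp only [gg, Polynomial.coeff_add, Polynomial.coeff_C, Polynomial.coeff_C_mul,
    Polynomial.coeff_X_one, mul_one, one_ne_zero, if_false, zero_add] at h2
  exact hnontriv k n a i₀ j₀ hpos hm' ha hne' h2

end Stmt6Aux

lemma frob (k : Type) [Field k] (n : ℕ) (a : Fin n → ℕ) (p : ℕ) (hp : p.Prime)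
    [CharP k p] (hdvd : ∀ i, p ∣ a i) :
    (∑ i, MvPolynomial.X i ^ a i : MvPolynomial (Fin n) k)
      = (∑ i, MvPolynomial.X i ^ (a i / p)) ^ p := by
  haveI : Fact p.Prime := ⟨hp⟩
  haveI : CharP (MvPolynomial (Fin n) k) p := inferInstance
  rw [sum_pow_char]
  apply Finset.sum_congr rfl
  intro i _
  rw [← pow_mul, Nat.div_mul_cancel (hdvd i)]

lemma key_exists (k : Type) [Field k] (n : ℕ) (hn : 2 ≤ n) (N : ℕ) :
    ∀ (a : Fin n → ℕ), (∑ i, a i) ≤ N → (∀ i, 0 < a i) → ∀ m, 1 < m →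
    ∃ φ : ExpMap k (MvPolynomial (Fin n) k ⧸ (Ideal.span
        {(∑ i, MvPolynomial.X i ^ a i) ^ m} : Ideal (MvPolynomial (Fin n) k))),
      φ.IsNontrivial := by
  induction N using Nat.strong_induction_on with
  | _ N IH =>
    intro a hsle hpos m hm
    by_cases hex : ∃ i, (a i : k) ≠ 0
    · obtain ⟨i₀, ha⟩ := hex
      obtain ⟨j₀, hne⟩ : ∃ j₀ : Fin n, j₀ ≠ i₀ := by
        rcases Decidable.eq_or_ne i₀ ⟨0, by omega⟩ with h | h
        · exact ⟨⟨1, by omega⟩, by rw [h]; intro hc; exact absurd (congrArg Fin.val hc) (by simp)⟩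
        · exact ⟨⟨0, by omega⟩, fun hc => h hc.symm⟩
      exact Stmt6Aux.exists_expmap k n a i₀ j₀ hpos hm hne ha
    · push_neg at hex
      have i1 : Fin n := ⟨0, by omega⟩
      set p := ringChar k with hpdef
      haveI hcp : CharP k p := ringChar.charP k
      have hp0 : p ≠ 0 := by
        intro h0
        haveI : CharP k 0 := h0 ▸ hcp
        haveI : CharZero k := CharP.charP_to_charZero k
        exact (hpos i1).ne' (Nat.cast_injective (R := k) (by simpa using hex i1))
      have hp : p.Prime := (CharP.char_is_prime_or_zero k p).resolve_right hp0
      have hdvd : ∀ i, p ∣ a i := fun i => (CharP.cast_eq_zero_iff k p (a i)).mp (hex i)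
      have hlt : ∑ i, a i / p < N := by
        have h1 : ∑ i, a i / p < ∑ i, a i := by
          apply Finset.sum_lt_sum_of_nonempty ⟨i1, Finset.mem_univ i1⟩
          intro i _
          exact Nat.div_lt_self (hpos i) hp.one_lt
        omega
      have hpos' : ∀ i, 0 < a i / p :=
        fun i => Nat.div_pos (Nat.le_of_dvd (hpos i) (hdvd i)) hp.pos
      have hkey := IH (∑ i, a i / p) hlt (fun i => a i / p) le_rfl hpos' (p * m)
        (lt_of_lt_of_le hp.one_lt (Nat.le_mul_of_pos_right p (by omega)))
      rw [frob k n a p hp hdvd, ← pow_mul]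
      exact hkey



/-- **Theorem B(iii).** Let `k` be a field of characteristic `p ≥ 0`,
`n ≥ 3`, `(a₁,…,a_n) ∈ ℤ_{>0}^n` and `m > 1`. Then
`A = k[X₁,…,X_n]/((X₁^{a₁} + ⋯ + X_n^{a_n})^m)` admits a non-trivial exponential
map. In particular, if `p > 0` and `p ∣ gcd(a₁,…,a_n)`, then
`k[X₁,…,X_n]/(X₁^{a₁} + ⋯ + X_n^{a_n})` admits a non-trivial exponential map. -/
theorem stmt6 (k : Type) [Field k] (p : ℕ) (hchar : ringChar k = p)
    (n : ℕ) (hn : 3 ≤ n) (a : Fin n → ℕ) (hpos : ∀ i, 0 < a i)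
    (m : ℕ) (hm : 1 < m) :
    (∃ φ : ExpMap k (MvPolynomial (Fin n) k ⧸ (Ideal.span
        {(∑ i, MvPolynomial.X i ^ a i) ^ m} : Ideal (MvPolynomial (Fin n) k))),
      φ.IsNontrivial) ∧
    (0 < p → p ∣ Finset.univ.gcd a →
      ∃ φ : ExpMap k (MvPolynomial (Fin n) k ⧸ (Ideal.span
        {∑ i, MvPolynomial.X i ^ a i} : Ideal (MvPolynomial (Fin n) k))),
        φ.IsNontrivial) := by
  constructor
  · exact key_exists k n (by omega) (∑ i, a i) a le_rfl hpos m hm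
  · intro hp hgcd
    haveI hcp : CharP k p := hchar ▸ ringChar.charP k
    have hprime : p.Prime := (CharP.char_is_prime_or_zero k p).resolve_right (by omega)
    have hdvd : ∀ i, p ∣ a i :=
      fun i => dvd_trans hgcd (Finset.gcd_dvd (Finset.mem_univ i))
    have hpos' : ∀ i, 0 < a i / p :=
      fun i => Nat.div_pos (Nat.le_of_dvd (hpos i) (hdvd i)) hprime.pos
    rw [frob k n a p hprime hdvd]
    exact key_exists k n (by omega) (∑ i, a i / p) (fun i => a i / p) le_rfl hpos' p
      hprime.one_lt
end
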